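/- arXiv:math/0412320 — 5 statements merged into one kernel-verified Lean document; each statement's English description precedes it below -/
import Mathlib

section
/- For every d ≥ 1, Voronoi's first perfect form Q[x] = Σ_{i=1}^d x_i² + Σ_{1≤i<j≤d} x_i x_j (associated with the root lattice A_d) is a perfect positive definite quadratic form. -/
open Matrix

noncomputable section

/-- `Q[x] = xᵀ Q x`. -/
def quadForm {d : ℕ} (Q : Matrix (Fin d) (Fin d) ℝ) (x : Fin d → ℝ) : ℝ :=
  x ⬝ᵥ (Q *ᵥ x)

/-- Coercion of an integer vector to a real vector. -/
def intCast {d : ℕ} (v : Fin d → ℤ) : Fin d → ℝ := fun i => (v i : ℝ)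

/-- A positive definite quadratic form: a symmetric positive definite real matrix. -/
def IsPQF {d : ℕ} (Q : Matrix (Fin d) (Fin d) ℝ) : Prop :=
  Q.IsSymm ∧ Q.PosDef

/-- The homogeneous minimum `λ(Q) = min {Q[v] : v ∈ ℤ^d \ {0}}`. -/
def homMin {d : ℕ} (Q : Matrix (Fin d) (Fin d) ℝ) : ℝ :=
  sInf {r | ∃ v : Fin d → ℤ, v ≠ 0 ∧ r = quadForm Q (intCast v)}

/-- The set of minimal vectors `Min(Q)`. -/
def minVecs {d : ℕ} (Q : Matrix (Fin d) (Fin d) ℝ) : Set (Fin d → ℤ) :=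
  {v | v ≠ 0 ∧ quadForm Q (intCast v) = homMin Q}

/-- The inhomogeneous minimum `μ(Q) = max_{x ∈ ℝ^d} min_{v ∈ ℤ^d} Q[x - v]`. -/
def inhomMin {d : ℕ} (Q : Matrix (Fin d) (Fin d) ℝ) : ℝ :=
  ⨆ x : Fin d → ℝ, ⨅ v : Fin d → ℤ, quadForm Q (x - intCast v)

/-- `κ_d`, the volume of the `d`-dimensional Euclidean unit ball. -/
def ballVol (d : ℕ) : ℝ :=
  (MeasureTheory.volume (Metric.ball (0 : EuclideanSpace ℝ (Fin d)) 1)).toReal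

/-- The packing density `δ(Q)`. -/
def packDensity {d : ℕ} (Q : Matrix (Fin d) (Fin d) ℝ) : ℝ :=
  Real.sqrt (homMin Q ^ d / Q.det) * ballVol d / 2 ^ d

/-- The covering density `Θ(Q)`. -/
def covDensity {d : ℕ} (Q : Matrix (Fin d) (Fin d) ℝ) : ℝ :=
  Real.sqrt (inhomMin Q ^ d / Q.det) * ballVol d

/-- The packing-covering constant `γ(Q)`. -/
def pcConst {d : ℕ} (Q : Matrix (Fin d) (Fin d) ℝ) : ℝ :=
  2 * Real.sqrt (inhomMin Q / homMin Q)

/-- `Q` is perfect: it is the unique symmetric matrix `Q'` with `Q'[v] = λ(Q)`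
for all `v ∈ Min(Q)`. -/
def IsPerfectForm {d : ℕ} (Q : Matrix (Fin d) (Fin d) ℝ) : Prop :=
  ∀ Q' : Matrix (Fin d) (Fin d) ℝ, Q'.IsSymm →
    (∀ v ∈ minVecs Q, quadForm Q' (intCast v) = homMin Q) → Q' = Q

/-- `Q` is eutactic: `Q⁻¹ = Σ_{v ∈ Min(Q)} c_v · v vᵀ` with all `c_v > 0`. -/
def IsEutacticForm {d : ℕ} (Q : Matrix (Fin d) (Fin d) ℝ) : Prop :=
  ∃ (s : Finset (Fin d → ℤ)) (c : (Fin d → ℤ) → ℝ),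
    (s : Set (Fin d → ℤ)) = minVecs Q ∧ (∀ v ∈ s, 0 < c v) ∧
    Q⁻¹ = ∑ v ∈ s, c v • vecMulVec (intCast v) (intCast v)

/-- `Q` is extreme: a local maximum of the packing density among PQFs. -/
def IsExtremeForm {d : ℕ} (Q : Matrix (Fin d) (Fin d) ℝ) : Prop :=
  ∃ ε > (0 : ℝ), ∀ Q' : Matrix (Fin d) (Fin d) ℝ, IsPQF Q' →
    (∀ i j, |Q' i j - Q i j| < ε) → packDensity Q' ≤ packDensity Q

/-- Voronoi's first perfect form: diagonal entries `1`, off-diagonal entries `1/2`. -/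
def voronoiFirstForm (d : ℕ) : Matrix (Fin d) (Fin d) ℝ :=
  Matrix.of fun i j => if i = j then 1 else 1/2


section VoronoiAux

lemma quadForm_voronoi {d : ℕ} (x : Fin d → ℝ) :
    quadForm (voronoiFirstForm d) x
      = ((∑ i, x i * x i) + (∑ i, x i) * (∑ i, x i)) / 2 := by
  have h1 : ∀ i : Fin d, (∑ j, (if i = j then (1:ℝ) else 1/2) * x j)
      = (∑ j, x j) / 2 + x i / 2 := by
    intro i
    have : ∀ j : Fin d, (if i = j then (1:ℝ) else 1/2) * x j
        = x j / 2 + (if j = i then x j / 2 else 0) := by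
      intro j
      by_cases h : i = j
      · subst h; simp
      · simp [h, Ne.symm h]; ring
    simp only [this, Finset.sum_add_distrib, Finset.sum_ite_eq', Finset.mem_univ,
      if_true, ← Finset.sum_div]
  simp only [quadForm, dotProduct, mulVec, voronoiFirstForm, of_apply]
  calc (∑ i, x i * ∑ j, (if i = j then (1:ℝ) else 1/2) * x j)
      = ∑ i, x i * ((∑ j, x j) / 2 + x i / 2) := by
        exact Finset.sum_congr rfl fun i _ => by rw [h1 i]
    _ = (∑ i, x i * ((∑ j, x j) / 2)) + ∑ i, x i * x i / 2 := by
        rw [← Finset.sum_add_distrib]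
        exact Finset.sum_congr rfl fun i _ => by ring
    _ = ((∑ i, x i * x i) + (∑ i, x i) * (∑ i, x i)) / 2 := by
        rw [← Finset.sum_mul, ← Finset.sum_div]; ring

lemma qf_single {d : ℕ} (M : Matrix (Fin d) (Fin d) ℝ) (a : Fin d) :
    quadForm M (intCast (Pi.single a 1)) = M a a := by
  simp [quadForm, intCast, dotProduct, mulVec, Pi.single_apply, ite_mul, mul_ite,
    Finset.sum_ite_eq']

lemma qf_sub {d : ℕ} (M : Matrix (Fin d) (Fin d) ℝ) (a b : Fin d) :
    quadForm M (intCast (Pi.single a 1 - Pi.single b 1))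
      = M a a - M a b - M b a + M b b := by
  simp only [quadForm, intCast, dotProduct, mulVec, Pi.sub_apply, Pi.single_apply,
    Int.cast_sub]
  push_cast
  simp only [apply_ite (fun z : ℤ => (z : ℝ)), Int.cast_one, Int.cast_zero,
    sub_mul, mul_sub, ite_mul, mul_ite, one_mul, zero_mul, mul_one, mul_zero,
    Finset.sum_sub_distrib, Finset.sum_ite_eq', Finset.mem_univ, if_true]
  ring

lemma int_two_le {d : ℕ} (v : Fin d → ℤ) (hv : v ≠ 0) :
    2 ≤ (∑ i, v i * v i) + (∑ i, v i) * (∑ i, v i) := by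
  obtain ⟨i, hi⟩ : ∃ i, v i ≠ 0 := by
    by_contra h; push_neg at h; exact hv (funext h)
  have h1 : 1 ≤ v i * v i := by simpa using Int.add_one_le_iff.mpr (mul_self_pos.mpr hi)
  by_cases hS : (∑ j, v j) = 0
  · obtain ⟨j, hji, hj⟩ : ∃ j, j ≠ i ∧ v j ≠ 0 := by
      by_contra h
      push_neg at h
      have : (∑ j, v j) = v i :=
        Finset.sum_eq_single i (fun b _ hb => h b hb) (by simp)
      exact hi (this ▸ hS)
    have h2 : 1 ≤ v j * v j := by simpa using Int.add_one_le_iff.mpr (mul_self_pos.mpr hj)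
    have hkey : v i * v i + v j * v j ≤ ∑ k, v k * v k := by
      have := Finset.sum_le_sum_of_subset_of_nonneg (Finset.subset_univ ({i, j} : Finset (Fin d)))
        (fun k _ _ => mul_self_nonneg (v k))
      rwa [Finset.sum_pair (Ne.symm hji)] at this
    rw [hS]
    linarith
  · have h2 : 1 ≤ (∑ j, v j) * (∑ j, v j) := by
      simpa using Int.add_one_le_iff.mpr (mul_self_pos.mpr hS)
    have hkey : v i * v i ≤ ∑ k, v k * v k :=
      Finset.single_le_sum (fun k _ => mul_self_nonneg (v k)) (Finset.mem_univ i)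
    linarith

lemma qf_int_ge_one {d : ℕ} (v : Fin d → ℤ) (hv : v ≠ 0) :
    1 ≤ quadForm (voronoiFirstForm d) (intCast v) := by
  rw [quadForm_voronoi]
  have : ((2:ℤ):ℝ) ≤ (((∑ i, v i * v i) + (∑ i, v i) * (∑ i, v i) : ℤ) : ℝ) := by
    exact_mod_cast int_two_le v hv
  push_cast at this
  simp only [intCast]
  linarith

lemma single_ne_zero' {d : ℕ} (a : Fin d) : (Pi.single a 1 : Fin d → ℤ) ≠ 0 := by
  intro h
  have := congrFun h a
  simp at this

lemma homMin_voronoi {d : ℕ} (hd : 1 ≤ d) : homMin (voronoiFirstForm d) = 1 := by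
  have i0 : Fin d := ⟨0, hd⟩
  have hmem : (1 : ℝ) ∈ {r | ∃ v : Fin d → ℤ, v ≠ 0 ∧ r = quadForm (voronoiFirstForm d) (intCast v)} := by
    refine ⟨Pi.single i0 1, single_ne_zero' i0, ?_⟩
    rw [qf_single]
    simp [voronoiFirstForm]
  have hlb : ∀ r ∈ {r | ∃ v : Fin d → ℤ, v ≠ 0 ∧ r = quadForm (voronoiFirstForm d) (intCast v)},
      (1:ℝ) ≤ r := by
    rintro r ⟨v, hv, rfl⟩
    exact qf_int_ge_one v hv
  exact le_antisymm (csInf_le ⟨1, hlb⟩ hmem) (le_csInf ⟨1, hmem⟩ hlb)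

lemma single_mem_minVecs {d : ℕ} (hd : 1 ≤ d) (a : Fin d) :
    Pi.single a 1 ∈ minVecs (voronoiFirstForm d) := by
  refine ⟨single_ne_zero' a, ?_⟩
  rw [qf_single, homMin_voronoi hd]
  simp [voronoiFirstForm]

lemma sub_mem_minVecs {d : ℕ} (hd : 1 ≤ d) (a b : Fin d) (hab : a ≠ b) :
    (Pi.single a 1 - Pi.single b 1 : Fin d → ℤ) ∈ minVecs (voronoiFirstForm d) := by
  constructor
  · intro h
    have := congrFun h a
    simp [Pi.single_apply, hab, Ne.symm hab] at this
  · rw [qf_sub, homMin_voronoi hd]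
    simp [voronoiFirstForm, hab, Ne.symm hab]
    norm_num

end VoronoiAux

/-- Voronoi's first perfect form is a perfect PQF. -/
theorem voronoiFirstForm_is_perfect (d : ℕ) (hd : 1 ≤ d) :
    IsPQF (voronoiFirstForm d) ∧ IsPerfectForm (voronoiFirstForm d) := by
  constructor
  · constructor
    · ext i j
      by_cases h : i = j <;> simp [voronoiFirstForm, h, Ne.symm]
    · constructor
      · ext i j
        by_cases h : i = j <;> simp [voronoiFirstForm, conjTranspose_apply, h, Ne.symm]
      · intro x hx
        obtain ⟨i, hi⟩ : ∃ i, x i ≠ 0 := by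
          by_contra h; push_neg at h; exact hx (Finsupp.ext h)
        have hpos : 0 < ∑ k, x k * x k := by
          have h1 : 0 < x i * x i := mul_self_pos.mpr hi
          have h2 : x i * x i ≤ ∑ k, x k * x k :=
            Finset.single_le_sum (fun k _ => mul_self_nonneg (x k)) (Finset.mem_univ i)
          linarith
        have hq : 0 < quadForm (voronoiFirstForm d) x := by
          rw [quadForm_voronoi]
          have := mul_self_nonneg (∑ k, x k)
          linarith
        refine lt_of_lt_of_eq hq ?_
        simp only [quadForm, dotProduct, mulVec, star_trivial]
        rw [Finsupp.sum_fintype _ _ (by simp)]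
        refine Finset.sum_congr rfl fun i _ => ?_
        rw [Finsupp.sum_fintype _ _ (by simp), Finset.mul_sum]
        refine Finset.sum_congr rfl fun j _ => ?_
        ring
  · intro Q' hs hmin
    have hhm := homMin_voronoi (d := d) hd
    have hdiag : ∀ a, Q' a a = 1 := by
      intro a
      have h := hmin _ (single_mem_minVecs hd a)
      rw [qf_single, hhm] at h
      exact h
    have hoff : ∀ a b, a ≠ b → Q' a b = 1/2 := by
      intro a b hab
      have h := hmin _ (sub_mem_minVecs hd a b hab)
      rw [qf_sub, hhm] at h
      have hsym : Q' a b = Q' b a := hs.apply b a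
      rw [hdiag a, hdiag b, ← hsym] at h
      linarith
    ext i j
    by_cases h : i = j
    · subst h; simp [voronoiFirstForm, hdiag]
    · simp [voronoiFirstForm, h, hoff i j h]
end
end

section
/- Every positive definite quadratic form in d variables is arithmetically equivalent to a Minkowski reduced positive definite quadratic form; that is, for every PQF Q there exists U ∈ GL_d(ℤ) such that UᵀQU is Minkowski reduced. -/
open Matrix

noncomputable section

/-- The gcd of the tail `(x_i, …, x_d)` of an integer vector. -/
def tailGcd {d : ℕ} (i : Fin d) (x : Fin d → ℤ) : ℤ :=
  Finset.gcd (Finset.univ.filter fun j => i ≤ j) x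

/-- Minkowski reduction conditions (i) and (ii). -/
def IsMinkowskiReduced {d : ℕ} (Q : Matrix (Fin d) (Fin d) ℝ) : Prop :=
  (∀ i : Fin d, ∀ x : Fin d → ℤ, tailGcd i x = 1 → Q i i ≤ quadForm Q (intCast x)) ∧
  (∀ i j : Fin d, (j : ℕ) = (i : ℕ) + 1 → 0 ≤ Q i j)

/-! ### Auxiliary lemmas -/

section Aux

/-- Every nonempty `Finset.gcd` over `ℤ` is nonnegative. -/
lemma int_gcd_nonneg {α : Type*} (s : Finset α) (f : α → ℤ) : 0 ≤ s.gcd f := by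
  rw [← Finset.normalize_gcd, ← Int.abs_eq_normalize]
  positivity

/-- A primitive integer vector is a column of a unimodular matrix. -/
lemma exists_unimodular_column {ι : Type} [Fintype ι] [DecidableEq ι] (i0 : ι) (y : ι → ℤ)
    (hy : Finset.gcd Finset.univ y = 1) :
    ∃ D : Matrix ι ι ℤ, IsUnit D.det ∧ ∀ k, D k i0 = y k := by
  have hy0 : y ≠ 0 := by
    rintro rfl
    have h0 : Finset.univ.gcd (0 : ι → ℤ) = 0 := Finset.gcd_eq_zero_iff.2 (fun x _ => rfl)
    rw [h0] at hy
    exact absurd hy (by norm_num)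
  classical
  set N : Submodule ℤ (ι → ℤ) := Submodule.span ℤ {y} with hN
  obtain ⟨n, snf⟩ := N.smithNormalForm (Pi.basisFun ℤ ι)
  have hli : LinearIndependent ℤ (fun _ : Fin 1 => y) := by
    apply linearIndependent_unique_iff.2
    exact hy0
  have hrange : Set.range (fun _ : Fin 1 => y) = {y} := by simp
  let b1 : Module.Basis (Fin 1) ℤ N := (Module.Basis.span hli).map (LinearEquiv.ofEq _ _ (by rw [hN, hrange]))
  have hn : n = 1 := by
    have h1 := Module.finrank_eq_card_basis snf.bN
    have h2 := Module.finrank_eq_card_basis b1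
    simp at h1 h2
    omega
  subst hn
  set w : N := snf.bN 0 with hw
  have hyN : y ∈ N := Submodule.mem_span_singleton_self y
  have hexp : (⟨y, hyN⟩ : N) = (snf.bN.repr ⟨y, hyN⟩ 0) • w := by
    conv_lhs => rw [← snf.bN.sum_repr ⟨y, hyN⟩]
    simp [hw]
  have hwN : (w : ι → ℤ) ∈ Submodule.span ℤ {y} := by rw [← hN]; exact w.2
  obtain ⟨t, ht⟩ := Submodule.mem_span_singleton.1 hwN
  set c : ℤ := snf.bN.repr ⟨y, hyN⟩ 0 with hc
  have hyc : y = c • (w : ι → ℤ) := by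
    have := congrArg (Subtype.val) hexp
    simpa using this
  have hct : c * t = 1 := by
    have h1 : (c * t) • y = (1 : ℤ) • y := by
      rw [one_smul, mul_smul, ht, ← hyc]
    exact smul_left_injective ℤ hy0 h1
  set g : ℤ := c * snf.a 0 with hg
  have hyg : y = g • (snf.bM (snf.f 0)) := by
    rw [hyc, hw, snf.snf 0, hg, mul_smul]
  have hgu : IsUnit g := by
    have hdvd : g ∣ Finset.gcd Finset.univ y := by
      apply Finset.dvd_gcd
      intro k _
      exact ⟨snf.bM (snf.f 0) k, by rw [hyg]; rfl⟩
    rw [hy] at hdvd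
    exact isUnit_of_dvd_one hdvd
  set b' : Module.Basis ι ℤ (ι → ℤ) := snf.bM.unitsSMul (fun j => if j = snf.f 0 then hgu.unit else 1)
    with hb'
  set b : Module.Basis ι ℤ (ι → ℤ) := b'.reindex (Equiv.swap (snf.f 0) i0) with hb
  have hbi0 : b i0 = y := by
    rw [hb, Module.Basis.reindex_apply, Equiv.symm_swap, Equiv.swap_apply_right, hb',
      Module.Basis.unitsSMul_apply, if_pos rfl, hyg]
    have huspec : (hgu.unit : ℤ) = g := IsUnit.unit_spec hgu
    rw [Units.smul_def, huspec]
  refine ⟨(Pi.basisFun ℤ ι).toMatrix b, ?_, ?_⟩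
  · have hmul := Module.Basis.toMatrix_mul_toMatrix_flip (Pi.basisFun ℤ ι) b
    have hdet := congrArg Matrix.det hmul
    rw [Matrix.det_mul, Matrix.det_one] at hdet
    exact IsUnit.of_mul_eq_one _ hdet
  · intro k
    rw [Module.Basis.toMatrix_apply, Pi.basisFun_repr, hbi0]

/-- Completion lemma: given `x` with `tailGcd i x = 1` there is a unimodular matrix whose
first `i` columns are standard basis vectors and whose `i`-th column is `x`. -/
lemma exists_completion {d : ℕ} (i : Fin d) (x : Fin d → ℤ) (hx : tailGcd i x = 1) :
    ∃ V : Matrix (Fin d) (Fin d) ℤ, IsUnit V.det ∧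
      (∀ j : Fin d, j < i → ∀ k, V k j = if k = j then (1:ℤ) else 0) ∧
      (∀ k, V k i = x k) := by
  classical
  set p : Fin d → Prop := fun j => j < i with hp
  have hgcd : Finset.gcd Finset.univ (fun j : {j // ¬ p j} => x j.1) = 1 := by
    rw [← hx]
    apply Int.dvd_antisymm (int_gcd_nonneg _ _) (int_gcd_nonneg _ _)
    · apply Finset.dvd_gcd
      intro j hj
      rw [Finset.mem_filter] at hj
      exact Finset.gcd_dvd (Finset.mem_univ (⟨j, not_lt.2 hj.2⟩ : {j // ¬ p j}))
    · apply Finset.dvd_gcd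
      intro k _
      exact Finset.gcd_dvd (Finset.mem_filter.2 ⟨Finset.mem_univ _, not_lt.1 k.2⟩)
  obtain ⟨D, hD, hDcol⟩ :=
    exists_unimodular_column (⟨i, lt_irrefl i⟩ : {j // ¬ p j}) (fun j => x j.1) hgcd
  set B : Matrix {j // p j} {j // ¬ p j} ℤ := fun a b => if b.1 = i then x a.1 else 0 with hB
  set W : Matrix ({j // p j} ⊕ {j // ¬ p j}) ({j // p j} ⊕ {j // ¬ p j}) ℤ :=
    fromBlocks 1 B 0 D with hW
  set e : {j // p j} ⊕ {j // ¬ p j} ≃ Fin d := Equiv.sumCompl p with he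
  have hWV : ∀ k j : Fin d, (W.submatrix e.symm e.symm) k j = W (e.symm k) (e.symm j) :=
    fun k j => rfl
  refine ⟨W.submatrix ⇑e.symm ⇑e.symm, ?_, ?_, ?_⟩
  · rw [Matrix.det_submatrix_equiv_self, hW, Matrix.det_fromBlocks_zero₂₁, Matrix.det_one, one_mul]
    exact hD
  · intro j hj k
    rw [hWV, Equiv.sumCompl_symm_apply_of_pos (p := p) hj]
    by_cases hk : p k
    · rw [Equiv.sumCompl_symm_apply_of_pos (p := p) hk, hW, Matrix.fromBlocks_apply₁₁,
        Matrix.one_apply]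
      simp [Subtype.ext_iff]
    · rw [Equiv.sumCompl_symm_apply_of_neg (p := p) hk, hW, Matrix.fromBlocks_apply₂₁]
      have hkj : k ≠ j := fun h => hk (h ▸ hj)
      simp [hkj]
  · intro k
    have hpi : ¬ p i := lt_irrefl i
    rw [hWV, Equiv.sumCompl_symm_apply_of_neg (p := p) hpi]
    by_cases hk : p k
    · rw [Equiv.sumCompl_symm_apply_of_pos (p := p) hk, hW, Matrix.fromBlocks_apply₁₂, hB]
      simp
    · rw [Equiv.sumCompl_symm_apply_of_neg (p := p) hk, hW, Matrix.fromBlocks_apply₂₂]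
      exact hDcol ⟨k, hk⟩

open scoped MatrixOrder in
lemma quad_eq_sq {d : ℕ} {Q : Matrix (Fin d) (Fin d) ℝ} (hQ : Q.PosDef) (w : Fin d → ℝ) :
    quadForm Q w = (CFC.sqrt Q *ᵥ w) ⬝ᵥ (CFC.sqrt Q *ᵥ w) := by
  set S := CFC.sqrt Q with hS
  have h1 : S * S = Q := CFC.sqrt_mul_sqrt_self Q (Matrix.nonneg_iff_posSemidef.2 hQ.posSemidef)
  have h2 : Sᵀ = S := by
    have := (Matrix.nonneg_iff_posSemidef.1 (CFC.sqrt_nonneg Q)).1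
    rwa [Matrix.IsHermitian, Matrix.conjTranspose_eq_transpose_of_trivial] at this
  rw [quadForm, ← h1, ← Matrix.mulVec_mulVec, Matrix.dotProduct_mulVec]
  have h3 : w ᵥ* S = S *ᵥ w := by
    calc w ᵥ* S = w ᵥ* Sᵀ := by rw [h2]
    _ = S *ᵥ w := Matrix.vecMul_transpose S w
  rw [h3]

open scoped MatrixOrder in
/-- The quadratic form attains a minimum on any nonempty set of integer vectors. -/
lemma exists_min_quad {d : ℕ} {Q : Matrix (Fin d) (Fin d) ℝ} (hQ : Q.PosDef)
    (T : Set (Fin d → ℤ)) (hT : T.Nonempty) :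
    ∃ v0 ∈ T, ∀ v ∈ T, quadForm Q (intCast v0) ≤ quadForm Q (intCast v) := by
  classical
  obtain ⟨t0, ht0⟩ := hT
  set S := CFC.sqrt Q with hS
  have hdetQ : Q.det ≠ 0 := ne_of_gt hQ.det_pos
  have hdetS : IsUnit S.det := by
    have h1 : S * S = Q := CFC.sqrt_mul_sqrt_self Q (Matrix.nonneg_iff_posSemidef.2 hQ.posSemidef)
    have : S.det * S.det = Q.det := by rw [← Matrix.det_mul, h1]
    refine isUnit_iff_ne_zero.2 (fun h => hdetQ ?_)
    rw [← this, h, zero_mul]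
  have hinv : S⁻¹ * S = 1 := Matrix.nonsing_inv_mul S hdetS
  set C : ℝ := quadForm Q (intCast t0) with hC
  set C' : ℝ := max C 0 with hC'
  set Nk : Fin d → ℝ := fun k => (∑ j, |S⁻¹ k j|) * Real.sqrt C' with hNk
  have key : ∀ v : Fin d → ℤ, quadForm Q (intCast v) ≤ C → ∀ k, |(v k : ℝ)| ≤ Nk k := by
    intro v hv k
    set u := S *ᵥ intCast v with hu
    have hquad : quadForm Q (intCast v) = u ⬝ᵥ u := quad_eq_sq hQ _
    have huj : ∀ j, |u j| ≤ Real.sqrt C' := by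
      intro j
      have h1 : u j ^ 2 ≤ u ⬝ᵥ u := by
        rw [dotProduct]
        have : ∀ l, 0 ≤ u l * u l := fun l => mul_self_nonneg _
        calc u j ^ 2 = u j * u j := sq _
        _ ≤ ∑ l, u l * u l := Finset.single_le_sum (fun l _ => this l) (Finset.mem_univ j)
      have h2 : u ⬝ᵥ u ≤ C' := by
        rw [← hquad]; exact le_trans hv (le_max_left _ _)
      calc |u j| = Real.sqrt (u j ^ 2) := (Real.sqrt_sq_eq_abs _).symm
      _ ≤ Real.sqrt C' := Real.sqrt_le_sqrt (le_trans h1 h2)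
    have hvk : intCast v k = ∑ j, S⁻¹ k j * u j := by
      have : intCast v = S⁻¹ *ᵥ u := by
        rw [hu, Matrix.mulVec_mulVec, hinv, Matrix.one_mulVec]
      rw [this]; rfl
    rw [show |(v k : ℝ)| = |intCast v k| from rfl, hvk]
    calc |∑ j, S⁻¹ k j * u j| ≤ ∑ j, |S⁻¹ k j * u j| := Finset.abs_sum_le_sum_abs _ _
    _ = ∑ j, |S⁻¹ k j| * |u j| := by simp [abs_mul]
    _ ≤ ∑ j, |S⁻¹ k j| * Real.sqrt C' := by
        apply Finset.sum_le_sum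
        intro j _
        exact mul_le_mul_of_nonneg_left (huj j) (abs_nonneg _)
    _ = (∑ j, |S⁻¹ k j|) * Real.sqrt C' := (Finset.sum_mul _ _ _).symm
    _ = Nk k := rfl
  set T' : Set (Fin d → ℤ) := {v ∈ T | quadForm Q (intCast v) ≤ C} with hT'
  have hT'fin : T'.Finite := by
    apply Set.Finite.subset (Set.finite_Icc (fun k => -⌈Nk k⌉) (fun k => ⌈Nk k⌉))
    intro v hv
    constructor
    · intro k
      have := key v hv.2 k
      have h1 : -(Nk k) ≤ (v k : ℝ) := neg_le_of_abs_le this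
      have h2 : ((-⌈Nk k⌉ : ℤ) : ℝ) ≤ (v k : ℝ) := by
        push_cast
        exact le_trans (neg_le_neg (Int.le_ceil _)) h1
      exact_mod_cast h2
    · intro k
      have := key v hv.2 k
      have h1 : (v k : ℝ) ≤ Nk k := le_of_abs_le this
      have h2 : (v k : ℝ) ≤ ((⌈Nk k⌉ : ℤ) : ℝ) := le_trans h1 (Int.le_ceil _)
      exact_mod_cast h2
  have hT'ne : T'.Nonempty := ⟨t0, ht0, le_refl _⟩
  obtain ⟨v0, hv0T', hv0min⟩ :=
    Set.exists_min_image T' (fun v => quadForm Q (intCast v)) hT'fin hT'ne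
  refine ⟨v0, hv0T'.1, fun v hv => ?_⟩
  by_cases h : quadForm Q (intCast v) ≤ C
  · exact hv0min v ⟨hv, h⟩
  · exact le_trans (hv0min t0 ⟨ht0, le_refl _⟩) (le_of_not_ge h)

/-! ### Lexicographic minimization over unimodular matrices -/

/-- `i`-th column of an integer matrix. -/
def colvec {d : ℕ} (U : Matrix (Fin d) (Fin d) ℤ) (i : Fin d) : Fin d → ℤ := fun k => U k i

/-- `n`-th index as an element of `Fin d`. -/
def idx {d : ℕ} (hd : 0 < d) (n : ℕ) : Fin d := ⟨n % d, Nat.mod_lt n hd⟩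

/-- Nested minimization sets: `SS Q hd n` are the unimodular matrices minimizing the
first `n` diagonal entries of `UᵀQU` lexicographically. -/
def SS {d : ℕ} (Q : Matrix (Fin d) (Fin d) ℝ) (hd : 0 < d) : ℕ → Set (Matrix (Fin d) (Fin d) ℤ)
  | 0 => {U | IsUnit U.det}
  | n + 1 => {U | U ∈ SS Q hd n ∧ ∀ W ∈ SS Q hd n,
      quadForm Q (intCast (colvec U (idx hd n))) ≤ quadForm Q (intCast (colvec W (idx hd n)))}

lemma SS_mono {d : ℕ} (Q : Matrix (Fin d) (Fin d) ℝ) (hd : 0 < d) {n m : ℕ} (h : n ≤ m) :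
    SS Q hd m ⊆ SS Q hd n := by
  induction m with
  | zero => simp_all
  | succ m ih =>
    rcases Nat.lt_or_ge n (m+1) with h' | h'
    · exact fun U hU => ih (Nat.lt_succ_iff.1 h') hU.1
    · have : n = m + 1 := le_antisymm h h'
      subst this
      exact fun U hU => hU

lemma SS_nonempty {d : ℕ} {Q : Matrix (Fin d) (Fin d) ℝ} (hQ : Q.PosDef) (hd : 0 < d) :
    ∀ n, (SS Q hd n).Nonempty := by
  intro n
  induction n with
  | zero => exact ⟨1, by simp [SS]⟩
  | succ n ih =>
    obtain ⟨W0, hW0⟩ := ih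
    set T : Set (Fin d → ℤ) := (fun U => colvec U (idx hd n)) '' SS Q hd n with hT
    obtain ⟨v0, hv0T, hv0min⟩ := exists_min_quad hQ T ⟨_, W0, hW0, rfl⟩
    obtain ⟨U0, hU0, hU0v⟩ := hv0T
    refine ⟨U0, hU0, fun W hW => ?_⟩
    simpa [← hU0v] using hv0min _ ⟨W, hW, rfl⟩

lemma SS_mem_of_cols {d : ℕ} {Q : Matrix (Fin d) (Fin d) ℝ} (hd : 0 < d) :
    ∀ (n : ℕ) (U : Matrix (Fin d) (Fin d) ℤ), U ∈ SS Q hd n →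
      ∀ (W : Matrix (Fin d) (Fin d) ℤ), IsUnit W.det →
        (∀ jn : ℕ, jn < n → colvec W (idx hd jn) = colvec U (idx hd jn)) → W ∈ SS Q hd n := by
  intro n
  induction n with
  | zero => exact fun U _ W hW _ => hW
  | succ n ih =>
    intro U hU W hW hcols
    refine ⟨ih U hU.1 W hW (fun jn hjn => hcols jn (Nat.lt_succ_of_lt hjn)), fun W' hW' => ?_⟩
    rw [hcols n (Nat.lt_succ_self n)]
    exact hU.2 W' hW'

/-! ### Quadratic form algebra -/

lemma quad_conj {d : ℕ} (Q A : Matrix (Fin d) (Fin d) ℝ) (y : Fin d → ℝ) :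
    quadForm (Aᵀ * Q * A) y = quadForm Q (A *ᵥ y) := by
  rw [quadForm, quadForm, ← Matrix.mulVec_mulVec, ← Matrix.mulVec_mulVec,
    Matrix.dotProduct_mulVec, Matrix.vecMul_transpose]

lemma cast_mulVec {d : ℕ} (U : Matrix (Fin d) (Fin d) ℤ) (x : Fin d → ℤ) :
    intCast (U *ᵥ x) = (U.map ((↑) : ℤ → ℝ)) *ᵥ intCast x := by
  funext k
  simp [intCast, Matrix.mulVec, dotProduct, Matrix.map_apply]

lemma quad_single {d : ℕ} (M : Matrix (Fin d) (Fin d) ℝ) (i : Fin d) :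
    quadForm M (intCast (fun k => if k = i then (1:ℤ) else 0)) = M i i := by
  simp [quadForm, Matrix.mulVec, dotProduct, intCast, apply_ite (fun z : ℤ => (z : ℝ)),
    mul_ite, ite_mul, Finset.sum_ite_eq', Finset.sum_ite_eq]

lemma colvec_mul {d : ℕ} (U V : Matrix (Fin d) (Fin d) ℤ) (j : Fin d) :
    colvec (U * V) j = U *ᵥ colvec V j := by
  funext k
  rw [colvec, Matrix.mul_apply]
  rfl

/-- Diagonal entries of the conjugated form are values at columns. -/
lemma conj_diag {d : ℕ} (Q : Matrix (Fin d) (Fin d) ℝ) (U : Matrix (Fin d) (Fin d) ℤ)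
    (i : Fin d) :
    ((U.map ((↑) : ℤ → ℝ))ᵀ * Q * U.map ((↑) : ℤ → ℝ)) i i
      = quadForm Q (intCast (colvec U i)) := by
  set A := U.map ((↑) : ℤ → ℝ) with hA
  have h1 : (Aᵀ * Q * A) i i = quadForm (Aᵀ * Q * A) (intCast (fun k => if k = i then 1 else 0)) :=
    (quad_single _ i).symm
  rw [h1, quad_conj]
  congr 1
  funext k
  simp [hA, Matrix.mulVec, dotProduct, intCast, apply_ite (fun z : ℤ => (z : ℝ)),
    mul_ite, Finset.sum_ite_eq', colvec]

end Aux

/-- Sign sequence for fixing condition (ii). -/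
def sgnseq {d : ℕ} (R : Matrix (Fin d) (Fin d) ℝ) : ℕ → ℤ
  | 0 => 1
  | n + 1 =>
    if h : n + 1 < d then
      (if R ⟨n, Nat.lt_of_succ_lt h⟩ ⟨n + 1, h⟩ < 0 then -sgnseq R n else sgnseq R n)
    else sgnseq R n

lemma sgnseq_sq {d : ℕ} (R : Matrix (Fin d) (Fin d) ℝ) : ∀ n, sgnseq R n * sgnseq R n = 1 := by
  intro n
  induction n with
  | zero => rfl
  | succ n ih =>
    rw [sgnseq]
    split
    · split
      · rw [neg_mul_neg]; exact ih
      · exact ih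
    · exact ih

/-- Every PQF is arithmetically equivalent to a Minkowski reduced PQF. -/
theorem exists_minkowski_reduced {d : ℕ} (Q : Matrix (Fin d) (Fin d) ℝ) (hQ : IsPQF Q) :
    ∃ U : Matrix (Fin d) (Fin d) ℤ, IsUnit U.det ∧
      IsMinkowskiReduced ((U.map ((↑) : ℤ → ℝ))ᵀ * Q * U.map ((↑) : ℤ → ℝ)) := by
  classical
  obtain ⟨hsym, hpos⟩ := hQ
  rcases Nat.eq_zero_or_pos d with hd0 | hd
  · subst hd0
    exact ⟨1, by simp, ⟨fun i => i.elim0, fun i => i.elim0⟩⟩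
  -- choose a lexicographically minimal unimodular matrix
  obtain ⟨U, hU⟩ := SS_nonempty hpos hd d
  have hUunit : IsUnit U.det := SS_mono Q hd (Nat.zero_le d) hU
  set A : Matrix (Fin d) (Fin d) ℝ := U.map ((↑) : ℤ → ℝ) with hA
  set R : Matrix (Fin d) (Fin d) ℝ := Aᵀ * Q * A with hR
  -- condition (i) holds for R
  have hRi : ∀ (i : Fin d) (x : Fin d → ℤ), tailGcd i x = 1 → R i i ≤ quadForm R (intCast x) := by
    intro i x hx
    obtain ⟨V, hVunit, hVcols, hVi⟩ := exists_completion i x hx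
    set W : Matrix (Fin d) (Fin d) ℤ := U * V with hWdef
    have hWunit : IsUnit W.det := by
      rw [hWdef, Matrix.det_mul]
      exact hUunit.mul hVunit
    have hcols : ∀ jn : ℕ, jn < (i : ℕ) → colvec W (idx hd jn) = colvec U (idx hd jn) := by
      intro jn hjn
      have hjnd : jn < d := lt_trans hjn i.2
      have hidx : (idx hd jn : Fin d) < i := by
        rw [Fin.lt_def]
        simpa [idx, Nat.mod_eq_of_lt hjnd] using hjn
      rw [hWdef, colvec_mul]
      funext k
      have hVj := hVcols (idx hd jn) hidx
      rw [Matrix.mulVec]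
      calc (fun l => U k l) ⬝ᵥ colvec V (idx hd jn)
          = ∑ l, U k l * (if l = idx hd jn then 1 else 0) := by
            rw [dotProduct]
            congr 1
            funext l
            rw [colvec, hVj l]
        _ = U k (idx hd jn) := by simp
        _ = colvec U (idx hd jn) k := rfl
    have hWmem : W ∈ SS Q hd (i : ℕ) := by
      exact SS_mem_of_cols hd (i : ℕ) U (SS_mono Q hd (le_of_lt i.2) hU) W hWunit hcols
    have hUmem : U ∈ SS Q hd ((i : ℕ) + 1) := SS_mono Q hd i.2 hU
    have hmin := hUmem.2 W hWmem
    have hidxi : idx hd (i : ℕ) = i := by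
      apply Fin.ext
      simp [idx, Nat.mod_eq_of_lt i.2]
    rw [hidxi] at hmin
    have hWi : colvec W i = U *ᵥ x := by
      rw [hWdef, colvec_mul, show colvec V i = x from funext hVi]
    calc R i i = quadForm Q (intCast (colvec U i)) := conj_diag Q U i
      _ ≤ quadForm Q (intCast (colvec W i)) := hmin
      _ = quadForm Q (A *ᵥ intCast x) := by rw [hWi, cast_mulVec, hA]
      _ = quadForm R (intCast x) := (quad_conj Q A (intCast x)).symm
  -- fix the signs
  set ε : Fin d → ℤ := fun i => sgnseq R (i : ℕ) with hε
  have hε2 : ∀ i, ε i * ε i = 1 := fun i => sgnseq_sq R (i : ℕ)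
  set E : Matrix (Fin d) (Fin d) ℤ := Matrix.diagonal ε with hE
  set U' : Matrix (Fin d) (Fin d) ℤ := U * E with hU'
  have hEunit : IsUnit E.det := by
    rw [hE, Matrix.det_diagonal]
    refine IsUnit.of_mul_eq_one (∏ i, ε i) ?_
    rw [← Finset.prod_mul_distrib]
    exact Finset.prod_eq_one (fun i _ => hε2 i)
  have hU'unit : IsUnit U'.det := by
    rw [hU', Matrix.det_mul]
    exact hUunit.mul hEunit
  set Er : Matrix (Fin d) (Fin d) ℝ := Matrix.diagonal (fun i => (ε i : ℝ)) with hEr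
  have hmapE : E.map ((↑) : ℤ → ℝ) = Er := by
    rw [hE, hEr]
    exact Matrix.diagonal_map (by simp)
  have hmapU' : U'.map ((↑) : ℤ → ℝ) = A * Er := by
    rw [hU', hA, ← hmapE]
    exact Matrix.map_mul (f := Int.castRingHom ℝ)
  set R' : Matrix (Fin d) (Fin d) ℝ :=
    (U'.map ((↑) : ℤ → ℝ))ᵀ * Q * U'.map ((↑) : ℤ → ℝ) with hR'
  have hR'E : R' = Erᵀ * R * Er := by
    rw [hR', hmapU', hR]
    rw [Matrix.transpose_mul]
    noncomm_ring
  have hR'entry : ∀ i j, R' i j = (ε i : ℝ) * R i j * (ε j : ℝ) := by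
    intro i j
    rw [hR'E, hEr, Matrix.diagonal_transpose, Matrix.mul_diagonal, Matrix.diagonal_mul]
  have hε2r : ∀ i, (ε i : ℝ) * (ε i : ℝ) = 1 := by
    intro i
    rw [← Int.cast_mul, hε2 i, Int.cast_one]
  refine ⟨U', hU'unit, ?_, ?_⟩
  · -- condition (i)
    intro i x hx
    rw [← hR']
    have hdiag : R' i i = R i i := by
      rw [hR'entry i i]
      calc (ε i : ℝ) * R i i * (ε i : ℝ) = ((ε i : ℝ) * (ε i : ℝ)) * R i i := by ring
        _ = R i i := by rw [hε2r i, one_mul]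
    have hquad : quadForm R' (intCast x) = quadForm R (intCast (fun j => ε j * x j)) := by
      rw [hR'E]
      have h1 : Erᵀ = Er := by rw [hEr, Matrix.diagonal_transpose]
      rw [h1, show Er * R * Er = Erᵀ * R * Er by rw [h1], quad_conj]
      congr 1
      funext k
      simp [hEr, Matrix.mulVec_diagonal, intCast]
    have htg : tailGcd i (fun j => ε j * x j) = 1 := by
      rw [← hx]
      apply Int.dvd_antisymm (int_gcd_nonneg _ _) (int_gcd_nonneg _ _)
      · apply Finset.dvd_gcd
        intro j hj
        have h1 : Finset.gcd _ (fun j => ε j * x j) ∣ ε j * x j := Finset.gcd_dvd hj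
        have h2 : ε j * x j ∣ x j := ⟨ε j, by rw [mul_comm, ← mul_assoc, hε2 j, one_mul]⟩
        exact h1.trans h2
      · apply Finset.dvd_gcd
        intro j hj
        exact (Finset.gcd_dvd hj).mul_left (ε j)
    rw [hdiag, hquad]
    exact hRi i (fun j => ε j * x j) htg
  · -- condition (ii)
    intro i j hij
    rw [← hR']
    have hjlt : (i : ℕ) + 1 < d := hij ▸ j.2
    have hεj : ε j = if R i j < 0 then -ε i else ε i := by
      have h1 : ε j = sgnseq R ((i : ℕ) + 1) := by
        rw [show (i : ℕ) + 1 = (j : ℕ) from hij.symm]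
      rw [h1, sgnseq, dif_pos hjlt]
      have hfi : (⟨(i : ℕ), Nat.lt_of_succ_lt hjlt⟩ : Fin d) = i := Fin.ext rfl
      have hfj : (⟨(i : ℕ) + 1, hjlt⟩ : Fin d) = j := Fin.ext hij.symm
      rw [hfi, hfj]
    rw [hR'entry i j]
    by_cases hneg : R i j < 0
    · rw [hεj, if_pos hneg]
      push_cast
      calc (ε i : ℝ) * R i j * (-(ε i : ℝ)) = ((ε i : ℝ) * (ε i : ℝ)) * (- R i j) := by ring
        _ = - R i j := by rw [hε2r i, one_mul]
        _ ≥ 0 := by linarith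
    · rw [hεj, if_neg hneg]
      calc (ε i : ℝ) * R i j * (ε i : ℝ) = ((ε i : ℝ) * (ε i : ℝ)) * R i j := by ring
        _ = R i j := by rw [hε2r i, one_mul]
        _ ≥ 0 := le_of_not_gt hneg
end
end

section
/- Let F be a positive definite quadratic form in d variables, let λ > 0, and consider the linear function f(Q) = trace(F·Q) on positive definite quadratic forms. Then f attains a minimum on the surface {Q PQF : λ(Q) = λ} at the point Q_F if and only if F lies in the cone generated by the rank-one matrices v vᵀ with v ∈ Min(Q_F), i.e., F = Σ_{v ∈ Min(Q_F)} c_v · v vᵀ for some coefficients c_v ≥ 0. -/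
open Matrix

noncomputable section

/-! ### Auxiliary lemmas -/

section Aux

/-- sum-of-squares of a real vector -/
def N2 {d : ℕ} (x : Fin d → ℝ) : ℝ := ∑ i, (x i) ^ 2

lemma quadForm_smul {d : ℕ} (Q : Matrix (Fin d) (Fin d) ℝ) (c : ℝ) (x : Fin d → ℝ) :
    quadForm (c • Q) x = c * quadForm Q x := by
  simp [quadForm, smul_mulVec, dotProduct_smul]

lemma quadForm_add {d : ℕ} (A B : Matrix (Fin d) (Fin d) ℝ) (x : Fin d → ℝ) :
    quadForm (A + B) x = quadForm A x + quadForm B x := by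
  simp [quadForm, add_mulVec, dotProduct_add]

lemma quadForm_smul_vec {d : ℕ} (Q : Matrix (Fin d) (Fin d) ℝ) (c : ℝ) (x : Fin d → ℝ) :
    quadForm Q (c • x) = c ^ 2 * quadForm Q x := by
  simp [quadForm, mulVec_smul, smul_dotProduct, dotProduct_smul]
  ring

lemma quadForm_eq_sum {d : ℕ} (Q : Matrix (Fin d) (Fin d) ℝ) (x : Fin d → ℝ) :
    quadForm Q x = ∑ i, ∑ j, Q i j * x i * x j := by
  simp [quadForm, dotProduct, mulVec, Finset.mul_sum]
  congr 1; ext i; congr 1; ext j; ring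

lemma quadForm_transpose {d : ℕ} (Q : Matrix (Fin d) (Fin d) ℝ) (x : Fin d → ℝ) :
    quadForm Qᵀ x = quadForm Q x := by
  rw [quadForm_eq_sum, quadForm_eq_sum, Finset.sum_comm]
  congr 1; ext i; congr 1; ext j; simp [transpose_apply]; ring

lemma trace_vecMulVec_mul {d : ℕ} (a : Fin d → ℝ) (Q : Matrix (Fin d) (Fin d) ℝ) :
    Matrix.trace (vecMulVec a a * Q) = quadForm Q a := by
  rw [quadForm_eq_sum]
  simp [Matrix.trace, Matrix.mul_apply, vecMulVec_apply, Matrix.diag]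
  rw [Finset.sum_comm]
  congr 1; ext i; congr 1; ext j; ring

lemma posdef_quadForm_pos {d : ℕ} {Q : Matrix (Fin d) (Fin d) ℝ} (hQ : Q.PosDef)
    {x : Fin d → ℝ} (hx : x ≠ 0) : 0 < quadForm Q x := by
  simpa [quadForm] using hQ.dotProduct_mulVec_pos hx

lemma possemidef_quadForm_nonneg {d : ℕ} {Q : Matrix (Fin d) (Fin d) ℝ} (hQ : Q.PosSemidef)
    (x : Fin d → ℝ) : 0 ≤ quadForm Q x := by
  simpa [quadForm] using hQ.dotProduct_mulVec_nonneg x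

lemma trace_mul_nonneg {d : ℕ} {F Q : Matrix (Fin d) (Fin d) ℝ}
    (hF : F.PosSemidef) (hQ : Q.PosSemidef) : 0 ≤ Matrix.trace (F * Q) := by
  obtain ⟨m, B, rfl⟩ : ∃ (m : ℕ) (B : Matrix (Fin m) (Fin d) ℝ), Q = Bᴴ * B := by
    obtain ⟨m, v, hv⟩ := Matrix.posSemidef_iff_eq_sum_vecMulVec.mp hQ
    refine ⟨m, Matrix.of fun i j => v i j, ?_⟩
    rw [hv]; ext a b
    simp [Matrix.mul_apply, vecMulVec_apply, Matrix.sum_apply, mul_comm]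
  rw [← Matrix.mul_assoc, Matrix.trace_mul_cycle]
  have : ∀ i, 0 ≤ (B * F * Bᴴ) i i := by
    intro i
    have h := possemidef_quadForm_nonneg hF (fun j => B i j)
    simp only [quadForm, dotProduct, mulVec, dotProduct] at h
    simp only [Matrix.mul_apply, Matrix.conjTranspose_apply, RCLike.star_def]
    convert h using 1
    simp [Finset.sum_mul, Finset.mul_sum]
    rw [Finset.sum_comm]
    congr 1; ext j; congr 1; ext k; ring
  exact Finset.sum_nonneg fun i _ => this i

lemma N2_nonneg {d : ℕ} (x : Fin d → ℝ) : 0 ≤ N2 x :=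
  Finset.sum_nonneg fun _ _ => sq_nonneg _

lemma N2_pos {d : ℕ} {x : Fin d → ℝ} (hx : x ≠ 0) : 0 < N2 x := by
  obtain ⟨i, hi⟩ : ∃ i, x i ≠ 0 := by
    by_contra h; push_neg at h; exact hx (funext h)
  have h1 : 0 < (x i)^2 := by positivity
  have : (x i)^2 ≤ N2 x := by
    unfold N2
    exact Finset.single_le_sum (f := fun k => (x k)^2) (fun k _ => sq_nonneg _)
      (Finset.mem_univ i)
  linarith

lemma abs_quadForm_le {d : ℕ} (R : Matrix (Fin d) (Fin d) ℝ) (x : Fin d → ℝ) :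
    |quadForm R x| ≤ (∑ i, ∑ j, |R i j|) * N2 x := by
  rw [quadForm_eq_sum, Finset.sum_mul]
  refine (Finset.abs_sum_le_sum_abs _ _).trans (Finset.sum_le_sum fun i _ => ?_)
  rw [Finset.sum_mul]
  refine (Finset.abs_sum_le_sum_abs _ _).trans (Finset.sum_le_sum fun j _ => ?_)
  rw [abs_mul, abs_mul]
  have h1 : |x i| * |x j| ≤ N2 x := by
    have hi : (x i)^2 ≤ N2 x := by
      unfold N2
      exact Finset.single_le_sum (f := fun k => (x k)^2) (fun k _ => sq_nonneg _)
        (Finset.mem_univ i)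
    have hj : (x j)^2 ≤ N2 x := by
      unfold N2
      exact Finset.single_le_sum (f := fun k => (x k)^2) (fun k _ => sq_nonneg _)
        (Finset.mem_univ j)
    nlinarith [abs_nonneg (x i), abs_nonneg (x j), sq_abs (x i), sq_abs (x j)]
  calc |R i j| * |x i| * |x j| = |R i j| * (|x i| * |x j|) := by ring
    _ ≤ |R i j| * N2 x := mul_le_mul_of_nonneg_left h1 (abs_nonneg _)

lemma norm_sq_eq_N2 {d : ℕ} (x : EuclideanSpace ℝ (Fin d)) : ‖x‖ ^ 2 = N2 (fun i => x i) := by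
  rw [EuclideanSpace.norm_eq]
  rw [Real.sq_sqrt (Finset.sum_nonneg fun i _ => sq_nonneg _)]
  simp [N2, sq_abs]

lemma posdef_lower_bound {d : ℕ} {Q : Matrix (Fin d) (Fin d) ℝ} (hQ : Q.PosDef) :
    ∃ m > (0:ℝ), ∀ x : Fin d → ℝ, m * N2 x ≤ quadForm Q x := by
  rcases Nat.eq_zero_or_pos d with hd | hd
  · subst hd
    exact ⟨1, one_pos, fun x => by simp [N2, quadForm, dotProduct]⟩
  have hcont : Continuous fun x : EuclideanSpace ℝ (Fin d) => quadForm Q (fun i => x i) := by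
    simp only [quadForm, dotProduct, mulVec]
    fun_prop
  have hne : (Metric.sphere (0 : EuclideanSpace ℝ (Fin d)) 1).Nonempty := by
    refine ⟨EuclideanSpace.single ⟨0, hd⟩ 1, ?_⟩
    simp [EuclideanSpace.norm_single]
  obtain ⟨x₀, hx₀mem, hx₀min⟩ :=
    (isCompact_sphere (0 : EuclideanSpace ℝ (Fin d)) 1).exists_isMinOn hne hcont.continuousOn
  have hx₀norm : ‖x₀‖ = 1 := by simpa using hx₀mem
  have hx₀ne : (fun i => x₀ i) ≠ (0 : Fin d → ℝ) := by
    intro h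
    have : x₀ = 0 := by ext i; exact congrFun h i
    rw [this] at hx₀norm; simp at hx₀norm
  set m := quadForm Q (fun i => x₀ i) with hm
  have hmpos : 0 < m := posdef_quadForm_pos hQ hx₀ne
  refine ⟨m, hmpos, fun x => ?_⟩
  by_cases hx : x = 0
  · simp [hx, N2, quadForm, dotProduct, mulVec]
  · set y : EuclideanSpace ℝ (Fin d) := (EuclideanSpace.equiv (Fin d) ℝ).symm x with hy
    have hyx : ∀ i, y i = x i := fun i => rfl
    have hyne : y ≠ 0 := by
      intro h; apply hx; ext i; rw [← hyx i, h]; rfl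
    have hnorm : 0 < ‖y‖ := norm_pos_iff.mpr hyne
    set z : EuclideanSpace ℝ (Fin d) := ‖y‖⁻¹ • y with hz
    have hzmem : z ∈ Metric.sphere (0 : EuclideanSpace ℝ (Fin d)) 1 := by
      simp [hz, norm_smul, abs_of_pos (inv_pos.mpr hnorm), inv_mul_cancel₀ hnorm.ne']
    have hmin : m ≤ quadForm Q (fun i => z i) := hx₀min hzmem
    have hzx : (fun i => z i) = ‖y‖⁻¹ • (fun i => x i) := by
      ext i; simp [hz, hyx]
    rw [hzx, quadForm_smul_vec] at hmin
    have hN2 : N2 x = ‖y‖ ^ 2 := by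
      rw [norm_sq_eq_N2]; congr 1
    have := mul_le_mul_of_nonneg_left hmin (sq_nonneg ‖y‖)
    have hq : quadForm Q x = quadForm Q fun i => x i := rfl
    calc m * N2 x = ‖y‖ ^ 2 * m := by rw [hN2]; ring
      _ ≤ ‖y‖ ^ 2 * ((‖y‖⁻¹) ^ 2 * quadForm Q fun i => x i) := this
      _ = quadForm Q x := by
          rw [hq]; field_simp

lemma one_le_N2_intCast {d : ℕ} {v : Fin d → ℤ} (hv : v ≠ 0) : 1 ≤ N2 (intCast v) := by
  obtain ⟨i, hi⟩ : ∃ i, v i ≠ 0 := by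
    by_contra h; push_neg at h; exact hv (funext h)
  have h1 : (1:ℝ) ≤ (intCast v i)^2 := by
    have h0 : (1:ℤ) ≤ (v i)^2 := by
      rcases lt_or_gt_of_ne hi with h | h <;> nlinarith
    have : ((1:ℤ):ℝ) ≤ (((v i)^2 : ℤ) : ℝ) := by exact_mod_cast h0
    push_cast at this
    simpa [intCast] using this
  refine h1.trans ?_
  unfold N2
  exact Finset.single_le_sum (f := fun k => (intCast v k)^2) (fun k _ => sq_nonneg _)
    (Finset.mem_univ i)

/-- Sublevel sets of a PQF on the integer lattice are finite. -/
lemma finite_sublevel {d : ℕ} {Q : Matrix (Fin d) (Fin d) ℝ} (hQ : Q.PosDef) (B : ℝ) :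
    {v : Fin d → ℤ | quadForm Q (intCast v) ≤ B}.Finite := by
  obtain ⟨m, hm, hbd⟩ := posdef_lower_bound hQ
  set N : ℤ := max 1 ⌈B / m⌉ with hN
  apply Set.Finite.subset (Set.Finite.pi (fun i : Fin d => Set.finite_Icc (-N) N))
  intro v hv
  simp only [Set.mem_setOf_eq] at hv
  have hN2 : N2 (intCast v) ≤ B / m := by
    rw [le_div_iff₀ hm]
    nlinarith [hbd (intCast v)]
  intro i _
  simp only [Set.mem_Icc]
  have hsq : ((v i : ℝ))^2 ≤ B / m := by
    refine le_trans ?_ hN2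
    unfold N2
    exact Finset.single_le_sum (f := fun k => (intCast v k)^2) (fun k _ => sq_nonneg _)
      (Finset.mem_univ i)
  have habs : |v i| ≤ N := by
    by_cases h1 : |v i| ≤ 1
    · exact h1.trans (le_max_left _ _)
    · push_neg at h1
      have h2 : (|v i| : ℝ) ≤ (v i : ℝ)^2 := by
        have h4 : (1:ℤ) ≤ |v i| := by omega
        have h3 : (|v i|:ℤ) ≤ |v i|^2 := by nlinarith
        have h5 : ((|v i|:ℤ):ℝ) ≤ ((|v i|^2:ℤ):ℝ) := by exact_mod_cast h3
        push_cast at h5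
        simpa [sq_abs] using h5
      have h6 : (|v i| : ℝ) ≤ B / m := h2.trans hsq
      have h7 : (|v i| : ℝ) ≤ (⌈B / m⌉ : ℝ) := h6.trans (Int.le_ceil _)
      have h8 : |v i| ≤ ⌈B / m⌉ := by exact_mod_cast h7
      exact h8.trans (le_max_right _ _)
  exact abs_le.mp habs

lemma intCast_ne_zero {d : ℕ} {v : Fin d → ℤ} (hv : v ≠ 0) : intCast v ≠ 0 := by
  intro h
  apply hv
  funext i
  have := congrFun h i
  simpa [intCast] using this

lemma valSet_nonempty {d : ℕ} (hd : 0 < d) (Q : Matrix (Fin d) (Fin d) ℝ) :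
    {r | ∃ v : Fin d → ℤ, v ≠ 0 ∧ r = quadForm Q (intCast v)}.Nonempty := by
  refine ⟨quadForm Q (intCast (fun _ => 1)), fun _ => 1, ?_, rfl⟩
  intro h
  have := congrFun h ⟨0, hd⟩
  simp at this

lemma valSet_bddBelow {d : ℕ} {Q : Matrix (Fin d) (Fin d) ℝ} (hQ : Q.PosDef) :
    BddBelow {r | ∃ v : Fin d → ℤ, v ≠ 0 ∧ r = quadForm Q (intCast v)} := by
  refine ⟨0, fun r hr => ?_⟩
  obtain ⟨v, hv, rfl⟩ := hr
  exact (posdef_quadForm_pos hQ (intCast_ne_zero hv)).le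

lemma homMin_le {d : ℕ} {Q : Matrix (Fin d) (Fin d) ℝ} (hQ : Q.PosDef)
    {v : Fin d → ℤ} (hv : v ≠ 0) : homMin Q ≤ quadForm Q (intCast v) :=
  csInf_le (valSet_bddBelow hQ) ⟨v, hv, rfl⟩

lemma le_homMin {d : ℕ} (hd : 0 < d) {Q : Matrix (Fin d) (Fin d) ℝ} {c : ℝ}
    (h : ∀ v : Fin d → ℤ, v ≠ 0 → c ≤ quadForm Q (intCast v)) : c ≤ homMin Q := by
  refine le_csInf (valSet_nonempty hd Q) ?_
  rintro r ⟨v, hv, rfl⟩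
  exact h v hv

lemma exists_minVec {d : ℕ} (hd : 0 < d) {Q : Matrix (Fin d) (Fin d) ℝ} (hQ : Q.PosDef) :
    ∃ v, v ∈ minVecs Q := by
  set w : Fin d → ℤ := fun _ => 1 with hw
  have hwne : w ≠ 0 := by
    intro h; have := congrFun h ⟨0, hd⟩; simp [hw] at this
  set B := quadForm Q (intCast w) with hB
  have hSfin : {v : Fin d → ℤ | v ≠ 0 ∧ quadForm Q (intCast v) ≤ B}.Finite :=
    (finite_sublevel hQ B).subset (fun v hv => hv.2)
  have hSne : {v : Fin d → ℤ | v ≠ 0 ∧ quadForm Q (intCast v) ≤ B}.Nonempty :=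
    ⟨w, hwne, le_refl _⟩
  obtain ⟨v₀, hv₀S, hv₀min⟩ := Set.exists_min_image _ (fun v => quadForm Q (intCast v)) hSfin hSne
  refine ⟨v₀, hv₀S.1, le_antisymm ?_ (homMin_le hQ hv₀S.1)⟩
  refine le_homMin hd ?_
  intro v hv
  by_cases hvB : quadForm Q (intCast v) ≤ B
  · exact hv₀min v ⟨hv, hvB⟩
  · push_neg at hvB
    exact ((hv₀min w ⟨hwne, le_refl _⟩).trans hvB.le)

lemma minVecs_finite {d : ℕ} {Q : Matrix (Fin d) (Fin d) ℝ} (hQ : Q.PosDef) :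
    (minVecs Q).Finite :=
  (finite_sublevel hQ (homMin Q)).subset (fun v hv => hv.2.le)

lemma second_min {d : ℕ} (hd : 0 < d) {Q : Matrix (Fin d) (Fin d) ℝ} (hQ : Q.PosDef) :
    ∃ lam₂ > homMin Q, ∀ v : Fin d → ℤ, v ≠ 0 → v ∉ minVecs Q →
      lam₂ ≤ quadForm Q (intCast v) := by
  set lam := homMin Q with hlam
  set T := {v : Fin d → ℤ | v ≠ 0 ∧ v ∉ minVecs Q ∧ quadForm Q (intCast v) ≤ lam + 1} with hT
  have hTfin : T.Finite := (finite_sublevel hQ (lam + 1)).subset (fun v hv => hv.2.2)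
  rcases Set.eq_empty_or_nonempty T with hTe | hTne
  · refine ⟨lam + 1, by linarith, fun v hv hvm => ?_⟩
    by_contra hlt
    push_neg at hlt
    exact (Set.eq_empty_iff_forall_notMem.mp hTe v) ⟨hv, hvm, hlt.le⟩
  · obtain ⟨v₁, hv₁T, hv₁min⟩ := Set.exists_min_image _ (fun v => quadForm Q (intCast v)) hTfin hTne
    refine ⟨quadForm Q (intCast v₁), ?_, fun v hv hvm => ?_⟩
    · refine lt_of_le_of_ne (homMin_le hQ hv₁T.1) ?_
      intro h
      exact hv₁T.2.1 ⟨hv₁T.1, h.symm⟩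
    · by_cases hvB : quadForm Q (intCast v) ≤ lam + 1
      · exact hv₁min v ⟨hv, hvm, hvB⟩
      · push_neg at hvB
        exact hv₁T.2.2.trans hvB.le

lemma homMin_smul {d : ℕ} (Q : Matrix (Fin d) (Fin d) ℝ) {s : ℝ} (hs : 0 ≤ s) :
    homMin (s • Q) = s * homMin Q := by
  unfold homMin
  rw [← smul_eq_mul, ← Real.sInf_smul_of_nonneg hs]
  congr 1
  ext r
  constructor
  · rintro ⟨v, hv, rfl⟩
    exact ⟨quadForm Q (intCast v), ⟨v, hv, rfl⟩, by simp [smul_eq_mul, ← quadForm_smul]⟩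
  · rintro ⟨r', ⟨v, hv, rfl⟩, rfl⟩
    exact ⟨v, hv, by simp [smul_eq_mul, ← quadForm_smul]⟩

/-- A matrix is a PQF as soon as it is symmetric and its quadratic form is positive. -/
lemma isPQF_of {d : ℕ} {A : Matrix (Fin d) (Fin d) ℝ} (hsymm : Aᵀ = A)
    (hq : ∀ x : Fin d → ℝ, x ≠ 0 → 0 < quadForm A x) : IsPQF A := by
  refine ⟨hsymm, Matrix.PosDef.of_dotProduct_mulVec_pos ?_ fun x hx => ?_⟩
  · rw [Matrix.IsHermitian, conjTranspose_eq_transpose_of_trivial]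
    exact hsymm
  · simpa [quadForm] using hq x hx

end Aux

/-! ### Cone, closedness and separation -/

section Cone

abbrev E2 (d : ℕ) := EuclideanSpace ℝ (Fin d × Fin d)

/-- embed a matrix into Euclidean space -/
def emb {d : ℕ} (A : Matrix (Fin d) (Fin d) ℝ) : E2 d := WithLp.toLp 2 (fun p : Fin d × Fin d => A p.1 p.2)

def gvec {d : ℕ} (v : Fin d → ℤ) : E2 d := emb (vecMulVec (intCast v) (intCast v))

def coneSet {d : ℕ} (s : Finset (Fin d → ℤ)) : Set (E2 d) :=
  {x | ∃ c : (Fin d → ℤ) → ℝ, (∀ v ∈ s, 0 ≤ c v) ∧ x = ∑ v ∈ s, c v • gvec v}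

def trE {d : ℕ} : E2 d →ₗ[ℝ] ℝ where
  toFun x := ∑ i, x (i, i)
  map_add' x y := by simp [Finset.sum_add_distrib]
  map_smul' c x := by simp [Finset.mul_sum]

lemma trE_continuous {d : ℕ} : Continuous (trE (d := d)) := by
  unfold trE
  simp only [LinearMap.coe_mk, AddHom.coe_mk]
  fun_prop

lemma trE_gvec {d : ℕ} {v : Fin d → ℤ} (hv : v ≠ 0) : 1 ≤ trE (gvec v) := by
  have : trE (gvec v) = N2 (intCast v) := by
    simp [trE, gvec, emb, vecMulVec_apply, N2, sq]
  rw [this]; exact one_le_N2_intCast hv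

lemma coneSet_isClosed {d : ℕ} (s : Finset (Fin d → ℤ)) (hs : ∀ v ∈ s, v ≠ 0) :
    IsClosed (coneSet s) := by
  apply IsSeqClosed.isClosed
  intro zn z hmem htend
  choose c hc hzc using hmem
  have htr : Filter.Tendsto (fun n => trE (zn n)) Filter.atTop (nhds (trE z)) :=
    (trE_continuous.tendsto z).comp htend
  obtain ⟨M, hM⟩ := htr.bddAbove_range
  have hMb : ∀ n, trE (zn n) ≤ M := fun n => hM (Set.mem_range_self n)
  have hcb : ∀ n, ∀ v ∈ s, c n v ≤ M := by
    intro n v hv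
    have h1 : trE (zn n) = ∑ w ∈ s, c n w * trE (gvec w) := by
      rw [hzc n]; simp [map_sum]
    have h2 : c n v * 1 ≤ ∑ w ∈ s, c n w * trE (gvec w) := by
      have hterm : c n v * 1 ≤ c n v * trE (gvec v) :=
        mul_le_mul_of_nonneg_left (trE_gvec (hs v hv)) (hc n v hv)
      have hrest : 0 ≤ ∑ w ∈ s.erase v, c n w * trE (gvec w) :=
        Finset.sum_nonneg fun w hw => mul_nonneg (hc n w (Finset.mem_of_mem_erase hw))
          ((zero_le_one).trans (trE_gvec (hs w (Finset.mem_of_mem_erase hw))))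
      have hsplit : ∑ w ∈ s, c n w * trE (gvec w)
          = (∑ w ∈ s.erase v, c n w * trE (gvec w)) + c n v * trE (gvec v) :=
        (Finset.sum_erase_add _ _ hv).symm
      rw [hsplit]
      linarith
    have := h2.trans_eq h1.symm
    linarith [this.trans (hMb n)]
  set b : ℕ → (↥s → ℝ) := fun n v => c n v.1 with hb
  have hbK : ∀ n, b n ∈ Set.Icc (0 : ↥s → ℝ) (fun _ => M) := by
    intro n
    constructor
    · intro v; exact hc n v.1 v.2
    · intro v; exact hcb n v.1 v.2
  obtain ⟨blim, hblimK, φ, hφ, hbtend⟩ :=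
    (isCompact_Icc (a := (0 : ↥s → ℝ)) (b := fun _ => M)).tendsto_subseq hbK
  set L : (↥s → ℝ) → E2 d := fun b => ∑ v : ↥s, b v • gvec v.1 with hL
  have hLcont : Continuous L := by
    apply continuous_finset_sum
    intro v _
    exact (continuous_apply v).smul continuous_const
  have hLb : ∀ n, L (b n) = zn n := by
    intro n
    rw [hL, hzc n]
    simp only
    rw [← Finset.sum_coe_sort s (fun v => c n v • gvec v)]
  have hz : z = L blim := by
    have h1 : Filter.Tendsto (fun k => zn (φ k)) Filter.atTop (nhds z) :=
      htend.comp hφ.tendsto_atTop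
    have h2 : Filter.Tendsto (fun k => L (b (φ k))) Filter.atTop (nhds (L blim)) :=
      (hLcont.tendsto blim).comp hbtend
    simp only [hLb] at h2
    exact tendsto_nhds_unique h1 h2
  refine ⟨fun v => if h : v ∈ s then blim ⟨v, h⟩ else 0, ?_, ?_⟩
  · intro v hv
    simp only [dif_pos hv]
    exact hblimK.1 ⟨v, hv⟩
  · rw [hz, hL]
    rw [← Finset.sum_coe_sort s (fun v => (if h : v ∈ s then blim ⟨v, h⟩ else 0) • gvec v)]
    apply Finset.sum_congr rfl
    intro v _
    simp [v.2]

def embL {d : ℕ} : Matrix (Fin d) (Fin d) ℝ →ₗ[ℝ] E2 d where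
  toFun := emb
  map_add' _ _ := rfl
  map_smul' _ _ := rfl

lemma embL_injective {d : ℕ} : Function.Injective (embL (d := d)) := by
  intro A B h
  ext i j
  exact congrFun (congrArg WithLp.ofLp h) (i, j)

def coneK {d : ℕ} (s : Finset (Fin d → ℤ)) : ConvexCone ℝ (E2 d) where
  carrier := coneSet s
  smul_mem' := by
    rintro t ht x ⟨c, hc, rfl⟩
    refine ⟨fun v => t * c v, fun v hv => mul_nonneg ht.le (hc v hv), ?_⟩
    rw [Finset.smul_sum]
    apply Finset.sum_congr rfl
    intro v _
    rw [smul_smul]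
  add_mem' := by
    rintro x ⟨c, hc, rfl⟩ y ⟨c', hc', rfl⟩
    refine ⟨fun v => c v + c' v, fun v hv => add_nonneg (hc v hv) (hc' v hv), ?_⟩
    rw [← Finset.sum_add_distrib]
    apply Finset.sum_congr rfl
    intro v _
    rw [add_smul]

lemma inner_emb {d : ℕ} (A : Matrix (Fin d) (Fin d) ℝ) (y : E2 d) :
    inner ℝ (emb A) y = ∑ i, ∑ j, A i j * y (i, j) := by
  rw [PiLp.inner_apply, Fintype.sum_prod_type]
  apply Finset.sum_congr rfl
  intro i _
  apply Finset.sum_congr rfl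
  intro j _
  simp [emb, RCLike.inner_apply, mul_comm]

lemma trace_mul_eq {d : ℕ} (A B : Matrix (Fin d) (Fin d) ℝ) :
    Matrix.trace (A * B) = ∑ i, ∑ j, A i j * B j i := by
  simp [Matrix.trace, Matrix.diag, Matrix.mul_apply]

lemma trace_mul_symm_eq {d : ℕ} (F R₀ : Matrix (Fin d) (Fin d) ℝ) (hF : F.IsSymm) :
    Matrix.trace (F * ((1/2 : ℝ) • (R₀ + R₀ᵀ))) = ∑ i, ∑ j, F i j * R₀ i j := by
  rw [trace_mul_eq]
  have expand : ∀ i j : Fin d, F i j * ((1/2 : ℝ) • (R₀ + R₀ᵀ)) j i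
      = 1/2 * (F i j * R₀ j i) + 1/2 * (F i j * R₀ i j) := by
    intro i j
    simp [Matrix.smul_apply, Matrix.add_apply, Matrix.transpose_apply]
    ring
  simp_rw [expand, Finset.sum_add_distrib]
  have h2 : (∑ i, ∑ j, 1/2 * (F i j * R₀ j i)) = ∑ i, ∑ j, 1/2 * (F i j * R₀ i j) := by
    rw [Finset.sum_comm]
    apply Finset.sum_congr rfl
    intro i _
    apply Finset.sum_congr rfl
    intro j _
    have h3 : F j i = F i j := by
      conv_lhs => rw [← hF]
      rfl
    rw [h3]
  rw [h2, ← Finset.sum_add_distrib]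
  apply Finset.sum_congr rfl
  intro i _
  rw [← Finset.sum_add_distrib]
  apply Finset.sum_congr rfl
  intro j _
  ring

/-- The separation lemma: if `F` is not a nonneg combination of the `v vᵀ`, there is a
symmetric `R`, nonnegative on the `v`'s, with `trace (F·R) < 0`. -/
lemma separation {d : ℕ} (s : Finset (Fin d → ℤ)) (hs : ∀ v ∈ s, v ≠ 0)
    (F : Matrix (Fin d) (Fin d) ℝ) (hFs : F.IsSymm)
    (hnot : ¬ ∃ c : (Fin d → ℤ) → ℝ, (∀ v ∈ s, 0 ≤ c v) ∧
      F = ∑ v ∈ s, c v • vecMulVec (intCast v) (intCast v)) :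
    ∃ R : Matrix (Fin d) (Fin d) ℝ, R.IsSymm ∧
      (∀ v ∈ s, 0 ≤ quadForm R (intCast v)) ∧ Matrix.trace (F * R) < 0 := by
  have hne : (coneK s : Set (E2 d)).Nonempty :=
    ⟨0, ⟨fun _ => 0, fun v _ => le_refl 0, by simp⟩⟩
  have hFnot : emb F ∉ coneK s := by
    rintro ⟨c, hc, hrep⟩
    apply hnot
    refine ⟨c, hc, ?_⟩
    apply embL_injective
    rw [show embL F = emb F from rfl, hrep, map_sum]
    apply Finset.sum_congr rfl
    intro v _
    rw [LinearMap.map_smul]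
    rfl
  let C : ProperCone ℝ (E2 d) :=
    { carrier := coneSet s
      add_mem' := fun hx hy => (coneK s).add_mem' hx hy
      zero_mem' := ⟨fun _ => 0, fun v _ => le_refl 0, by simp⟩
      smul_mem' := by
        rintro t x ⟨c, hc, rfl⟩
        refine ⟨fun v => t * c v, fun v hv => mul_nonneg t.2 (hc v hv), ?_⟩
        rw [Finset.smul_sum]
        apply Finset.sum_congr rfl
        intro v _
        exact smul_smul (t : ℝ) (c v) (gvec v)
      isClosed' := coneSet_isClosed s hs }
  obtain ⟨y, hy1, hy2⟩ := ProperCone.hyperplane_separation' C hFnot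
  set R₀ : Matrix (Fin d) (Fin d) ℝ := Matrix.of (fun i j => y (i, j)) with hR₀
  refine ⟨(1/2 : ℝ) • (R₀ + R₀ᵀ), ?_, ?_, ?_⟩
  · unfold Matrix.IsSymm
    rw [transpose_smul, transpose_add, transpose_transpose, add_comm]
  · intro v hv
    have hmem : gvec v ∈ coneK s := by
      refine ⟨fun w => if w = v then 1 else 0, fun w _ => by positivity, ?_⟩
      rw [Finset.sum_eq_single v]
      · simp
      · intro w _ hw; simp [hw]
      · intro h; exact absurd hv h
    have := hy1 _ hmem
    rw [quadForm_smul, quadForm_add, quadForm_transpose]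
    have hq : quadForm R₀ (intCast v) = inner ℝ (gvec v) y := by
      rw [quadForm_eq_sum,
        show (gvec v : E2 d) = emb (vecMulVec (intCast v) (intCast v)) from rfl, inner_emb]
      apply Finset.sum_congr rfl
      intro i _
      apply Finset.sum_congr rfl
      intro j _
      simp [hR₀, vecMulVec_apply]
      ring
    rw [hq] at *
    linarith [this]
  · have h3 : Matrix.trace (F * ((1/2 : ℝ) • (R₀ + R₀ᵀ))) = inner ℝ (emb F) y := by
      rw [trace_mul_symm_eq F R₀ hFs, inner_emb]
      apply Finset.sum_congr rfl
      intro i _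
      apply Finset.sum_congr rfl
      intro j _
      rfl
    rw [h3]
    exact hy2

end Cone

/-- The linear function `Q ↦ trace(F·Q)` attains a minimum on the surface
`{Q PQF : λ(Q) = lam}` at `Q_F` if and only if `F` lies in the cone generated by
the matrices `v vᵀ`, `v ∈ Min(Q_F)`. -/
theorem trace_min_on_homMin_surface_iff {d : ℕ} (F QF : Matrix (Fin d) (Fin d) ℝ)
    (hF : IsPQF F) (lam : ℝ) (hlam : 0 < lam) (hQF : IsPQF QF) (hmin : homMin QF = lam) :
    (∀ Q : Matrix (Fin d) (Fin d) ℝ, IsPQF Q → homMin Q = lam →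
        Matrix.trace (F * QF) ≤ Matrix.trace (F * Q)) ↔
      ∃ (s : Finset (Fin d → ℤ)) (c : (Fin d → ℤ) → ℝ),
        (∀ v ∈ s, v ∈ minVecs QF ∧ 0 ≤ c v) ∧
        F = ∑ v ∈ s, c v • vecMulVec (intCast v) (intCast v) := by
  have key : ∀ (c : (Fin d → ℤ) → ℝ) (s : Finset (Fin d → ℤ))
      (Q' : Matrix (Fin d) (Fin d) ℝ),
      Matrix.trace ((∑ v ∈ s, c v • vecMulVec (intCast v) (intCast v)) * Q')
        = ∑ v ∈ s, c v * quadForm Q' (intCast v) := by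
    intro c s Q'
    rw [Finset.sum_mul, Matrix.trace_sum]
    apply Finset.sum_congr rfl
    intro v _
    rw [smul_mul_assoc, Matrix.trace_smul, trace_vecMulVec_mul]
    simp [smul_eq_mul]
  constructor
  · -- forward direction
    intro hLHS
    rcases Nat.eq_zero_or_pos d with hd0 | hd
    · exfalso
      subst hd0
      have hempty : {r | ∃ v : Fin 0 → ℤ, v ≠ 0 ∧ r = quadForm QF (intCast v)} = ∅ := by
        ext r
        simp only [Set.mem_setOf_eq, Set.mem_empty_iff_false, iff_false]
        rintro ⟨v, hv, -⟩
        exact hv (funext fun i => i.elim0)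
      have h0 : homMin QF = 0 := by
        unfold homMin
        rw [hempty, Real.sInf_empty]
      rw [hmin] at h0
      linarith
    by_contra hnot
    set sfin := (minVecs_finite hQF.2).toFinset with hsfin
    have hmemiff : ∀ v, v ∈ sfin ↔ v ∈ minVecs QF := fun v => Set.Finite.mem_toFinset _
    have hs : ∀ v ∈ sfin, v ≠ 0 := fun v hv => ((hmemiff v).mp hv).1
    have hnot' : ¬ ∃ c : (Fin d → ℤ) → ℝ, (∀ v ∈ sfin, 0 ≤ c v) ∧
        F = ∑ v ∈ sfin, c v • vecMulVec (intCast v) (intCast v) := by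
      rintro ⟨c, hc, hrep⟩
      exact hnot ⟨sfin, c, fun v hv => ⟨(hmemiff v).mp hv, hc v hv⟩, hrep⟩
    obtain ⟨R, hRsym, hRnn, hRtr⟩ := separation sfin hs F hF.1 hnot'
    obtain ⟨m, hm, hbd⟩ := posdef_lower_bound hQF.2
    set CR := (∑ i, ∑ j, |R i j|) + 1 with hCR
    have habs0 : 0 ≤ ∑ i, ∑ j, |R i j| :=
      Finset.sum_nonneg fun i _ => Finset.sum_nonneg fun j _ => abs_nonneg _
    have hCRpos : 0 < CR := by rw [hCR]; linarith
    have hRb : ∀ x : Fin d → ℝ, |quadForm R x| ≤ CR * N2 x := by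
      intro x
      refine (abs_quadForm_le R x).trans ?_
      have := N2_nonneg x
      rw [hCR]
      nlinarith
    obtain ⟨lam₂, hlam₂gt, hlam₂⟩ := second_min hd hQF.2
    rw [hmin] at hlam₂gt
    have hlam₂pos : 0 < lam₂ := lt_trans hlam hlam₂gt
    have hsub : 0 < lam₂ - lam := by linarith
    set t := min (m / (2 * CR)) (m * (lam₂ - lam) / (2 * CR * lam₂)) with ht
    have ht1 : 0 < t := lt_min (by positivity) (by positivity)
    have htm : t * CR < m := by
      have h1 : t ≤ m / (2 * CR) := min_le_left _ _
      have h2 : t * (2 * CR) ≤ m := (le_div_iff₀ (by positivity : (0:ℝ) < 2 * CR)).mp h1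
      nlinarith
    have ht2 : t * CR * lam₂ ≤ m * (lam₂ - lam) := by
      have h1 : t ≤ m * (lam₂ - lam) / (2 * CR * lam₂) := min_le_right _ _
      have h2 : t * (2 * CR * lam₂) ≤ m * (lam₂ - lam) :=
        (le_div_iff₀ (by positivity : (0:ℝ) < 2 * CR * lam₂)).mp h1
      nlinarith
    set Qt := QF + t • R with hQt
    have hQtq : ∀ x : Fin d → ℝ, quadForm Qt x = quadForm QF x + t * quadForm R x := by
      intro x
      rw [hQt, quadForm_add, quadForm_smul]
    have hQtpos : ∀ x : Fin d → ℝ, x ≠ 0 → 0 < quadForm Qt x := by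
      intro x hx
      rw [hQtq]
      have h1 := hbd x
      have h2 := abs_le.mp (hRb x)
      have h3 := N2_pos hx
      nlinarith [h2.1]
    have hQtsymm : Qtᵀ = Qt := by
      rw [hQt, transpose_add, transpose_smul]
      rw [show QFᵀ = QF from hQF.1, show Rᵀ = R from hRsym]
    have hQtPQF : IsPQF Qt := isPQF_of hQtsymm hQtpos
    have hQtminlow : lam ≤ homMin Qt := by
      refine le_homMin hd ?_
      intro v hv
      rw [hQtq]
      by_cases hvm : v ∈ minVecs QF
      · have h1 : quadForm QF (intCast v) = lam := by rw [hvm.2, hmin]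
        have h2 : 0 ≤ quadForm R (intCast v) := hRnn v ((hmemiff v).mpr hvm)
        nlinarith
      · have h2 := hlam₂ v hv hvm
        have h3 := hbd (intCast v)
        have h4 := abs_le.mp (hRb (intCast v))
        have h5 := N2_nonneg (intCast v)
        -- m*lam ≤ m*(q + t*r)
        have h6 : 0 < quadForm QF (intCast v) := lt_of_lt_of_le hlam₂pos h2
        nlinarith [mul_le_mul_of_nonneg_left h4.1 ht1.le, mul_le_mul_of_nonneg_left h3
          (mul_nonneg ht1.le hCRpos.le)]
    have hQtmin_pos : 0 < homMin Qt := lt_of_lt_of_le hlam hQtminlow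
    set st := lam / homMin Qt with hst
    have hst0 : 0 < st := div_pos hlam hQtmin_pos
    have hst1 : st ≤ 1 := (div_le_one hQtmin_pos).mpr hQtminlow
    set Q' := st • Qt with hQ'
    have hQ'PQF : IsPQF Q' := by
      refine isPQF_of ?_ ?_
      · rw [hQ', transpose_smul, hQtsymm]
      · intro x hx
        rw [hQ', quadForm_smul]
        exact mul_pos hst0 (hQtpos x hx)
    have hQ'min : homMin Q' = lam := by
      rw [hQ', homMin_smul _ hst0.le, hst]
      field_simp
    have hle := hLHS Q' hQ'PQF hQ'min
    have htrQ' : Matrix.trace (F * Q')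
        = st * (Matrix.trace (F * QF) + t * Matrix.trace (F * R)) := by
      rw [hQ', mul_smul_comm, Matrix.trace_smul, hQt, mul_add, Matrix.trace_add,
        mul_smul_comm, Matrix.trace_smul]
      simp [smul_eq_mul]
    have hT0 : 0 ≤ Matrix.trace (F * QF) :=
      trace_mul_nonneg hF.2.posSemidef hQF.2.posSemidef
    rw [htrQ'] at hle
    set T0 := Matrix.trace (F * QF) with hT0d
    set TR := Matrix.trace (F * R) with hTRd
    have h2 : t * TR < 0 := mul_neg_of_pos_of_neg ht1 hRtr
    rcases le_or_gt 0 (T0 + t * TR) with hpos | hneg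
    · have h1 : st * (T0 + t * TR) ≤ T0 + t * TR := by
        calc st * (T0 + t * TR) ≤ 1 * (T0 + t * TR) :=
              mul_le_mul_of_nonneg_right hst1 hpos
          _ = T0 + t * TR := one_mul _
      linarith
    · have h1 : st * (T0 + t * TR) < 0 := mul_neg_of_pos_of_neg hst0 hneg
      linarith
  · -- backward direction
    rintro ⟨s, c, hsc, hFeq⟩
    intro Q hQ hQmin
    rw [hFeq, key, key]
    apply Finset.sum_le_sum
    intro v hv
    obtain ⟨hvmem, hcv⟩ := hsc v hv
    have h1 : quadForm QF (intCast v) = lam := by rw [hvmem.2, hmin]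
    have h2 : lam ≤ quadForm Q (intCast v) := by
      rw [← hQmin]
      exact homMin_le hQ.2 hvmem.1
    rw [h1]
    exact mul_le_mul_of_nonneg_left h2 hcv
end
end

section
/- For every d ≥ 2, the inhomogeneous minimum of the quadratic form Q_{A*_d} (with diagonal entries d and off-diagonal entries −1) equals μ(Q_{A*_d}) = d(d+2)/12. -/
open Matrix

noncomputable section

/-- The form `Q_{A*_d}` with diagonal entries `d` and off-diagonal entries `-1`. -/
def QAstar (d : ℕ) : Matrix (Fin d) (Fin d) ℝ :=
  Matrix.of fun i j => if i = j then (d : ℝ) else -1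

namespace InhomAux

open Finset

def V (n : ℕ) (x : ℕ → ℝ) : ℝ :=
  (n : ℝ) * (∑ i ∈ range n, (x i)^2) - (∑ i ∈ range n, x i)^2

lemma V_pair (n : ℕ) (x : ℕ → ℝ) :
    V n x = ∑ j ∈ range n, ∑ i ∈ range j, (x j - x i)^2 := by
  induction n with
  | zero => simp [V]
  | succ m ih =>
    rw [sum_range_succ, ← ih]
    simp only [V, sum_range_succ]
    have hcard : ∑ i ∈ range m, (x m - x i)^2
        = (m : ℝ) * (x m)^2 - 2 * x m * (∑ i ∈ range m, x i) + ∑ i ∈ range m, (x i)^2 := by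
      rw [Finset.sum_congr rfl (fun i _ => by ring :
        ∀ i ∈ range m, (x m - x i)^2 = (x m)^2 - 2 * x m * x i + (x i)^2)]
      rw [Finset.sum_add_distrib, Finset.sum_sub_distrib, Finset.sum_const, ← Finset.mul_sum]
      simp [nsmul_eq_mul]
    rw [hcard]
    push_cast
    ring

lemma V_nonneg (n : ℕ) (x : ℕ → ℝ) : 0 ≤ V n x := by
  rw [V_pair]
  exact Finset.sum_nonneg fun j _ => Finset.sum_nonneg fun i _ => sq_nonneg _

lemma V_congr {n : ℕ} {x y : ℕ → ℝ} (h : ∀ i < n, x i = y i) : V n x = V n y := by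
  unfold V
  rw [Finset.sum_congr rfl (fun i hi => by rw [h i (mem_range.mp hi)]),
      Finset.sum_congr rfl (fun i hi => by rw [h i (mem_range.mp hi)] : 
        ∀ i ∈ range n, x i = y i)]

lemma V_add_const (n : ℕ) (x : ℕ → ℝ) (c : ℝ) : V n (fun i => x i + c) = V n x := by
  unfold V
  have h1 : ∑ i ∈ range n, (x i + c)^2
      = (∑ i ∈ range n, (x i)^2) + 2 * c * (∑ i ∈ range n, x i) + n * c^2 := by
    rw [Finset.sum_congr rfl (fun i _ => by ring :
      ∀ i ∈ range n, (x i + c)^2 = (x i)^2 + 2 * c * x i + c^2)]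
    rw [Finset.sum_add_distrib, Finset.sum_add_distrib, Finset.sum_const, ← Finset.mul_sum]
    simp [nsmul_eq_mul]
    try ring
  have h2 : ∑ i ∈ range n, (x i + c) = (∑ i ∈ range n, x i) + n * c := by
    rw [Finset.sum_add_distrib, Finset.sum_const]
    simp [nsmul_eq_mul]
  rw [h1, h2]
  ring

lemma V_smul (n : ℕ) (x : ℕ → ℝ) (c : ℝ) : V n (fun i => c * x i) = c^2 * V n x := by
  unfold V
  rw [Finset.sum_congr rfl (fun i _ => by ring :
      ∀ i ∈ range n, (c * x i)^2 = c^2 * (x i)^2), ← Finset.mul_sum, ← Finset.mul_sum]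
  ring

lemma V_double (n : ℕ) (x : ℕ → ℝ) :
    ∑ j ∈ range n, ∑ i ∈ range n, (x j - x i)^2 = 2 * V n x := by
  unfold V
  have : ∀ j ∈ range n, ∑ i ∈ range n, (x j - x i)^2
      = (n : ℝ) * (x j)^2 - 2 * x j * (∑ i ∈ range n, x i) + ∑ i ∈ range n, (x i)^2 := by
    intro j _
    rw [Finset.sum_congr rfl (fun i _ => by ring :
      ∀ i ∈ range n, (x j - x i)^2 = (x j)^2 - 2 * x j * x i + (x i)^2)]
    rw [Finset.sum_add_distrib, Finset.sum_sub_distrib, Finset.sum_const, ← Finset.mul_sum]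
    simp [nsmul_eq_mul]
  rw [Finset.sum_congr rfl this, Finset.sum_add_distrib, Finset.sum_sub_distrib]
  have e1 : ∑ j ∈ range n, 2 * x j * (∑ i ∈ range n, x i)
      = 2 * (∑ i ∈ range n, x i) * (∑ i ∈ range n, x i) := by
    rw [← Finset.sum_mul, ← Finset.mul_sum]
  have e2 : ∑ _j ∈ range n, ((n:ℝ) * 0 + ∑ i ∈ range n, (x i)^2)
      = (n : ℝ) * ∑ i ∈ range n, (x i)^2 := by
    rw [Finset.sum_const]
    simp [nsmul_eq_mul]
  simp only [mul_zero, zero_add] at e2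
  have e3 : ∑ j ∈ range n, (n:ℝ) * (x j)^2 = (n:ℝ) * ∑ i ∈ range n, (x i)^2 :=
    (Finset.mul_sum _ _ _).symm
  rw [e1, e2, e3]
  ring

lemma sum_range_cast (n : ℕ) : ∑ i ∈ range n, (i : ℝ) = n * (n - 1) / 2 := by
  induction n with
  | zero => simp
  | succ m ih => rw [sum_range_succ, ih]; push_cast; ring

lemma sum_range_cast_sq (n : ℕ) : ∑ i ∈ range n, (i : ℝ)^2 = n * (n - 1) * (2 * n - 1) / 6 := by
  induction n with
  | zero => simp
  | succ m ih => rw [sum_range_succ, ih]; push_cast; ring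

lemma double_swap (n : ℕ) (x : ℕ → ℝ) :
    ∑ j ∈ range n, ∑ i ∈ range j, x i = ∑ i ∈ range n, ((n : ℝ) - 1 - i) * x i := by
  induction n with
  | zero => simp
  | succ m ih =>
    rw [sum_range_succ, ih, sum_range_succ]
    push_cast
    have : ∀ i ∈ range m, ((m:ℝ) + 1 - 1 - i) * x i = ((m:ℝ) - 1 - i) * x i + x i := by
      intro i _; ring
    rw [Finset.sum_congr rfl this, Finset.sum_add_distrib]
    ring

def G (n : ℕ) (w : ℕ → ℝ) : ℝ :=
  ∑ j ∈ range n, ∑ i ∈ range j, (w j - w i) * (1 - (w j - w i))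

lemma G_le (n : ℕ) (hn : 1 ≤ n) (w : ℕ → ℝ) : G n w ≤ ((n : ℝ)^2 - 1) / 12 := by
  have hn0 : (n : ℝ) ≠ 0 := by positivity
  set A := ∑ i ∈ range n, w i with hA
  set B := ∑ i ∈ range n, (w i)^2 with hB
  set D := ∑ i ∈ range n, (i : ℝ) * w i with hD
  -- linear part
  have hlin : ∑ j ∈ range n, ∑ i ∈ range j, (w j - w i)
      = 2 * D - ((n : ℝ) - 1) * A := by
    have h1 : ∀ j ∈ range n, ∑ i ∈ range j, (w j - w i)
        = (j : ℝ) * w j - ∑ i ∈ range j, w i := by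
      intro j _
      rw [Finset.sum_sub_distrib, Finset.sum_const, card_range, nsmul_eq_mul]
    rw [Finset.sum_congr rfl h1, Finset.sum_sub_distrib, double_swap]
    have h2 : ∑ i ∈ range n, ((n : ℝ) - 1 - i) * w i = ((n:ℝ) - 1) * A - D := by
      rw [Finset.sum_congr rfl (fun i _ => by ring :
        ∀ i ∈ range n, ((n : ℝ) - 1 - i) * w i = ((n:ℝ) - 1) * w i - (i:ℝ) * w i),
        Finset.sum_sub_distrib, ← Finset.mul_sum]
    rw [h2]
    ring
  have hG : G n w = (2 * D - ((n : ℝ) - 1) * A) - ((n : ℝ) * B - A^2) := by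
    unfold G
    have : ∀ j ∈ range n, ∑ i ∈ range j, (w j - w i) * (1 - (w j - w i))
        = (∑ i ∈ range j, (w j - w i)) - ∑ i ∈ range j, (w j - w i)^2 := by
      intro j _
      rw [← Finset.sum_sub_distrib]
      exact Finset.sum_congr rfl fun i _ => by ring
    rw [Finset.sum_congr rfl this, Finset.sum_sub_distrib, hlin, ← V_pair]
    rfl
  -- the centered vector
  set y : ℕ → ℝ := fun i => w i - (i : ℝ) / n with hy
  have hy1 : ∑ i ∈ range n, y i = A - (n * (n-1)/2) / n := by
    simp only [hy]
    rw [Finset.sum_sub_distrib, ← sum_range_cast n]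
    rw [Finset.sum_div]
  have hy2 : ∑ i ∈ range n, (y i)^2
      = B - (2 / n) * D + (n * (n-1) * (2*n-1)/6) / (n:ℝ)^2 := by
    simp only [hy]
    rw [Finset.sum_congr rfl (fun i _ => by field_simp; ring :
      ∀ i ∈ range n, (w i - (i:ℝ)/n)^2
        = (w i)^2 - (2/n) * ((i:ℝ) * w i) + ((i:ℝ)^2) / (n:ℝ)^2)]
    rw [Finset.sum_add_distrib, Finset.sum_sub_distrib, ← Finset.mul_sum, ← Finset.sum_div,
      sum_range_cast_sq]
  have hVy : V n y = (n:ℝ) * (B - (2 / n) * D + (n * (n-1) * (2*n-1)/6) / (n:ℝ)^2)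
      - (A - (n * (n-1)/2) / n)^2 := by
    unfold V
    rw [hy1, hy2]
  have key : G n w = ((n : ℝ)^2 - 1) / 12 - V n y := by
    rw [hG, hVy]
    field_simp
    ring
  have := V_nonneg n y
  linarith [key, this]

lemma exists_cut (n : ℕ) (hn : 1 ≤ n) (w : ℕ → ℝ)
    (hmono : ∀ i j, i ≤ j → j < n → w i ≤ w j)
    (hwidth : w (n-1) - w 0 ≤ 1) :
    ∃ k < n, V n (fun i => w i + if i < k then 1 else 0) ≤ G n w := by
  set Wc : ℕ → ℕ → ℝ := fun k i => w i + if i < k then 1 else 0 with hWc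
  set a : ℕ → ℝ := fun k => if k = 0 then 1 - w (n-1) + w 0 else w k - w (k-1) with ha
  have ha_nonneg : ∀ k ∈ range n, 0 ≤ a k := by
    intro k hk
    rcases k with _ | k'
    · simp only [ha, if_pos rfl]; linarith
    · simp only [ha, if_neg (Nat.succ_ne_zero k')]
      have := hmono k' (k'+1) (Nat.le_succ k') (mem_range.mp hk)
      simpa using sub_nonneg.mpr this
  have ha_Ioc : ∀ i j : ℕ, i ≤ j → j < n → ∑ k ∈ Ioc i j, a k = w j - w i := by
    intro i j
    induction j with
    | zero =>
      intro hij _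
      interval_cases i
      simp
    | succ j ih =>
      intro hij hjn
      rcases Nat.eq_or_lt_of_le hij with h | h
      · rw [← h]; simp
      · have hij' : i ≤ j := Nat.lt_succ_iff.mp h
        rw [Finset.sum_Ioc_succ_top hij', ih hij' (Nat.lt_of_succ_lt hjn)]
        have : a (j+1) = w (j+1) - w j := by simp only [ha, if_neg (Nat.succ_ne_zero j)]; simp
        rw [this]; ring
  have ha_sum : ∑ k ∈ range n, a k = 1 := by
    obtain ⟨m, rfl⟩ : ∃ m, n = m + 1 := ⟨n - 1, (Nat.succ_pred_eq_of_pos hn).symm⟩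
    rw [Finset.sum_range_succ']
    have h1 : ∀ i, a (i + 1) = w (i+1) - w i := by
      intro i; simp only [ha, if_neg (Nat.succ_ne_zero i)]; simp
    rw [Finset.sum_congr rfl (fun i _ => h1 i), Finset.sum_range_sub w m]
    simp only [ha, if_pos rfl]
    have : m + 1 - 1 = m := rfl
    rw [this]; ring
  have hV : ∀ k, V n (Wc k) = ∑ j ∈ range n, ∑ i ∈ range j,
      ((w j - w i) - if i < k ∧ k ≤ j then 1 else 0)^2 := by
    intro k
    rw [V_pair]
    refine Finset.sum_congr rfl fun j hj => Finset.sum_congr rfl fun i hi => ?_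
    have hij : i < j := mem_range.mp hi
    simp only [hWc]
    split_ifs
    all_goals try (exfalso; omega)
    all_goals ring
  have key : ∑ k ∈ range n, a k * V n (Wc k) = G n w := by
    have step1 : ∑ k ∈ range n, a k * V n (Wc k)
        = ∑ k ∈ range n, ∑ j ∈ range n, ∑ i ∈ range j,
            a k * ((w j - w i) - if i < k ∧ k ≤ j then 1 else 0)^2 := by
      refine Finset.sum_congr rfl fun k _ => ?_
      rw [hV k, Finset.mul_sum]
      exact Finset.sum_congr rfl fun j _ => Finset.mul_sum _ _ _
    rw [step1, Finset.sum_comm]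
    refine Finset.sum_congr rfl fun j hj => ?_
    rw [Finset.sum_comm]
    refine Finset.sum_congr rfl fun i hi => ?_
    have hij : i < j := mem_range.mp hi
    have hjn : j < n := mem_range.mp hj
    set δ := w j - w i with hδ
    have hsummand : ∀ k ∈ range n, a k * (δ - if i < k ∧ k ≤ j then 1 else 0)^2
        = a k * δ^2 + (if i < k ∧ k ≤ j then a k * ((δ-1)^2 - δ^2) else 0) := by
      intro k _; split_ifs <;> ring
    rw [Finset.sum_congr rfl hsummand, Finset.sum_add_distrib, ← Finset.sum_filter]
    have hfil : (range n).filter (fun k => i < k ∧ k ≤ j) = Ioc i j := by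
      ext t
      simp only [mem_filter, mem_range, mem_Ioc]
      omega
    rw [hfil]
    have h1 : ∑ k ∈ range n, a k * δ^2 = δ^2 := by
      rw [← Finset.sum_mul, ha_sum, one_mul]
    have h2 : ∑ k ∈ Ioc i j, a k * ((δ-1)^2 - δ^2) = δ * ((δ-1)^2 - δ^2) := by
      rw [← Finset.sum_mul, ha_Ioc i j (Nat.le_of_lt hij) hjn]
    rw [h1, h2]
    ring
  obtain ⟨k₀, hk₀mem, hk₀min⟩ := Finset.exists_min_image (range n) (fun k => V n (Wc k))
    ⟨0, mem_range.mpr hn⟩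
  refine ⟨k₀, mem_range.mp hk₀mem, ?_⟩
  calc V n (Wc k₀) = (∑ k ∈ range n, a k) * V n (Wc k₀) := by rw [ha_sum, one_mul]
    _ = ∑ k ∈ range n, a k * V n (Wc k₀) := Finset.sum_mul _ _ _
    _ ≤ ∑ k ∈ range n, a k * V n (Wc k) :=
        Finset.sum_le_sum fun k hk => mul_le_mul_of_nonneg_left (hk₀min k hk) (ha_nonneg k hk)
    _ = G n w := key

lemma strictMono_gap {n : ℕ} (c : Fin n → ℤ) (hc : StrictMono c) :
    ∀ (k : ℕ) (i j : Fin n), (j : ℕ) = (i : ℕ) + k → (i : ℤ) + k ≤ c j - c i + i := by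
  intro k
  induction k with
  | zero =>
    intro i j h
    have : i = j := Fin.ext h.symm
    subst this
    simp
  | succ m ih =>
    intro i j h
    have hj : (i : ℕ) + m < n := by omega
    have h1 := ih i ⟨(i : ℕ) + m, hj⟩ rfl
    have h2 : c ⟨(i : ℕ) + m, hj⟩ < c j :=
      hc (by rw [Fin.lt_iff_val_lt_val]; simp; omega)
    push_cast at h1 ⊢
    omega

lemma abs_gap {n : ℕ} (c : Fin n → ℤ) (hc : StrictMono c) (i j : Fin n) :
    |(i : ℤ) - (j : ℤ)| ≤ |c i - c j| := by
  rcases le_total i j with h | h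
  · have hval : (i : ℕ) ≤ (j : ℕ) := Fin.le_iff_val_le_val.mp h
    have hk : (j : ℕ) = (i : ℕ) + ((j : ℕ) - (i : ℕ)) := by omega
    have hgap := strictMono_gap c hc ((j : ℕ) - (i : ℕ)) i j hk
    have hij : (i : ℤ) ≤ (j : ℤ) := by exact_mod_cast hval
    have hcij : c i ≤ c j := hc.monotone h
    rw [abs_sub_comm, abs_of_nonneg (by omega), abs_sub_comm (c i), abs_of_nonneg (by omega)]
    have hcast : (((j : ℕ) - (i : ℕ) : ℕ) : ℤ) = (j : ℤ) - (i : ℤ) := by omega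
    omega
  · have hval : (j : ℕ) ≤ (i : ℕ) := Fin.le_iff_val_le_val.mp h
    have hk : (i : ℕ) = (j : ℕ) + ((i : ℕ) - (j : ℕ)) := by omega
    have hgap := strictMono_gap c hc ((i : ℕ) - (j : ℕ)) j i hk
    have hij : (j : ℤ) ≤ (i : ℤ) := by exact_mod_cast hval
    have hcij : c j ≤ c i := hc.monotone h
    rw [abs_of_nonneg (by omega), abs_of_nonneg (by omega)]
    have hcast : (((i : ℕ) - (j : ℕ) : ℕ) : ℤ) = (i : ℤ) - (j : ℤ) := by omega
    omega

lemma sq_double_sum (n : ℕ) :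
    ∑ j ∈ range n, ∑ i ∈ range n, ((j : ℝ) - (i : ℝ))^2 = (n:ℝ)^2 * ((n:ℝ)^2 - 1) / 6 := by
  have h := V_double n (fun i => (i : ℝ))
  rw [h]
  unfold V
  rw [sum_range_cast, sum_range_cast_sq]
  ring

lemma inj_double_sum_lb {n : ℕ} (f : Fin n → ℤ) (hf : Function.Injective f) :
    (n : ℝ)^2 * ((n : ℝ)^2 - 1) / 6
      ≤ ∑ i : Fin n, ∑ j : Fin n, ((f i : ℝ) - (f j : ℝ))^2 := by
  classical
  set σ := Tuple.sort f with hσ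
  have hmono : Monotone (f ∘ σ) := Tuple.monotone_sort f
  have hc : StrictMono (f ∘ σ) := hmono.strictMono_of_injective (hf.comp (Equiv.injective σ))
  have hperm : ∑ i : Fin n, ∑ j : Fin n, ((f i : ℝ) - (f j : ℝ))^2
      = ∑ i : Fin n, ∑ j : Fin n, ((f (σ i) : ℝ) - (f (σ j) : ℝ))^2 := by
    rw [← Equiv.sum_comp σ (fun i => ∑ j : Fin n, ((f i : ℝ) - (f j : ℝ))^2)]
    refine Finset.sum_congr rfl fun i _ => ?_
    rw [← Equiv.sum_comp σ (fun j => ((f (σ i) : ℝ) - (f j : ℝ))^2)]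
  rw [hperm]
  have hterm : ∀ i j : Fin n, ((i : ℝ) - (j : ℝ))^2 ≤ ((f (σ i) : ℝ) - (f (σ j) : ℝ))^2 := by
    intro i j
    have h := abs_gap (f ∘ σ) hc i j
    have hz : ((i : ℤ) - (j : ℤ))^2 ≤ ((f ∘ σ) i - (f ∘ σ) j)^2 := by
      rw [← sq_abs ((i:ℤ) - (j:ℤ)), ← sq_abs ((f ∘ σ) i - (f ∘ σ) j)]
      exact pow_le_pow_left₀ (abs_nonneg _) h 2
    have hr := (by exact_mod_cast hz : (((i:ℤ) - (j:ℤ) : ℤ) : ℝ)^2 ≤ (((f ∘ σ) i - (f ∘ σ) j : ℤ) : ℝ)^2)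
    push_cast at hr
    convert hr using 2
    rfl
  have hsum : ∑ i : Fin n, ∑ j : Fin n, ((i : ℝ) - (j : ℝ))^2
      ≤ ∑ i : Fin n, ∑ j : Fin n, ((f (σ i) : ℝ) - (f (σ j) : ℝ))^2 :=
    Finset.sum_le_sum fun i _ => Finset.sum_le_sum fun j _ => hterm i j
  refine le_trans (le_of_eq ?_) hsum
  rw [← sq_double_sum n]
  rw [Fin.sum_univ_eq_sum_range (fun i => ∑ j : Fin n, ((i : ℝ) - (j : ℝ))^2) n]
  exact Finset.sum_congr rfl fun j _ =>
    (Fin.sum_univ_eq_sum_range (fun i => ((j : ℝ) - (i : ℝ))^2) n).symm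

/-- Extend a `Fin d` vector to `ℕ` with a `0` prepended. -/
def mkz (d : ℕ) (y : Fin d → ℝ) : ℕ → ℝ :=
  fun i => if h : 1 ≤ i ∧ i ≤ d then y ⟨i - 1, by omega⟩ else 0

lemma mkz_zero (d : ℕ) (y : Fin d → ℝ) : mkz d y 0 = 0 := by simp [mkz]

lemma mkz_succ (d : ℕ) (y : Fin d → ℝ) (i : Fin d) : mkz d y ((i : ℕ) + 1) = y i := by
  have h : 1 ≤ (i : ℕ) + 1 ∧ (i : ℕ) + 1 ≤ d := ⟨Nat.le_add_left _ _, i.isLt⟩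
  simp only [mkz, dif_pos h]
  congr 1

lemma sum_mkz (d : ℕ) (φ : ℝ → ℝ) (hφ : φ 0 = 0) (y : Fin d → ℝ) :
    ∑ i ∈ range (d+1), φ (mkz d y i) = ∑ i : Fin d, φ (y i) := by
  rw [Finset.sum_range_succ' (fun i => φ (mkz d y i)) d, mkz_zero, hφ, add_zero,
    ← Fin.sum_univ_eq_sum_range (fun i => φ (mkz d y (i + 1))) d]
  refine Finset.sum_congr rfl fun i _ => ?_
  rw [mkz_succ d y i]

lemma quadForm_expand {d : ℕ} (y : Fin d → ℝ) :
    quadForm (QAstar d) y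
      = ((d : ℝ) + 1) * (∑ i : Fin d, (y i)^2) - (∑ i : Fin d, y i)^2 := by
  unfold quadForm QAstar
  unfold dotProduct Matrix.mulVec
  simp only [Matrix.of_apply]
  have hrow : ∀ i : Fin d, (∑ j : Fin d, (if i = j then (d:ℝ) else -1) * y j)
      = ((d : ℝ) + 1) * y i - ∑ j : Fin d, y j := by
    intro i
    have : ∀ j : Fin d, (if i = j then (d:ℝ) else -1) * y j
        = (if i = j then ((d:ℝ)+1) * y j else 0) - y j := by
      intro j; split_ifs <;> ring
    rw [Finset.sum_congr rfl fun j _ => this j, Finset.sum_sub_distrib,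
      Finset.sum_ite_eq _ i (fun j => ((d:ℝ)+1) * y j)]
    simp
  have : ∀ i : Fin d, y i * (∑ j : Fin d, (if i = j then (d:ℝ) else -1) * y j)
      = ((d:ℝ)+1) * (y i)^2 - y i * ∑ j : Fin d, y j := by
    intro i; rw [hrow i]; ring
  rw [Finset.sum_congr rfl fun i _ => by
    simp only [dotProduct, Matrix.mulVec, Matrix.of_apply]; exact this i]
  rw [Finset.sum_sub_distrib, ← Finset.mul_sum, ← Finset.sum_mul]
  ring

lemma quadForm_eq_V {d : ℕ} (y : Fin d → ℝ) :
    quadForm (QAstar d) y = V (d+1) (mkz d y) := by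
  rw [quadForm_expand]
  unfold V
  have h1 := sum_mkz d (fun t => t^2) (by norm_num) y
  have h2 := sum_mkz d (fun t => t) rfl y
  rw [h1, h2]
  push_cast
  ring

lemma quadForm_nonneg {d : ℕ} (y : Fin d → ℝ) : 0 ≤ quadForm (QAstar d) y := by
  rw [quadForm_eq_V]; exact V_nonneg _ _

lemma V_perm (n : ℕ) (g : Fin n → ℝ) (σ : Equiv.Perm (Fin n)) :
    V n (fun i => if h : i < n then g (σ ⟨i, h⟩) else 0)
      = V n (fun i => if h : i < n then g ⟨i, h⟩ else 0) := by
  unfold V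
  have key : ∀ (φ : ℝ → ℝ) (f : Fin n → ℝ),
      ∑ i ∈ range n, φ (if h : i < n then f ⟨i, h⟩ else 0) = ∑ t : Fin n, φ (f t) := by
    intro φ f
    rw [← Fin.sum_univ_eq_sum_range (fun i => φ (if h : i < n then f ⟨i, h⟩ else 0)) n]
    exact Finset.sum_congr rfl fun t _ => by simp [t.isLt]
  have k1 := key (fun t => t^2) (fun t => g (σ t))
  have k2 := key (fun t => t^2) g
  have k3 := key (fun t => t) (fun t => g (σ t))
  have k4 := key (fun t => t) g
  rw [k1, k2, k3, k4, Equiv.sum_comp σ g, Equiv.sum_comp σ (fun t => (g t)^2)]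

/-- Lemma B : for every x there is a good integer vector. -/
lemma exists_good {d : ℕ} (hd : 2 ≤ d) (x : Fin d → ℝ) :
    ∃ v : Fin d → ℤ,
      quadForm (QAstar d) (x - intCast v) ≤ (d : ℝ) * ((d : ℝ) + 2) / 12 := by
  set n := d + 1 with hn
  have hn1 : 1 ≤ n := by omega
  set z : ℕ → ℝ := mkz d x with hz
  set fz : Fin n → ℝ := fun t => Int.fract (z t) with hfz
  set σ := Tuple.sort fz with hσ
  set w : ℕ → ℝ := fun k => if h : k < n then fz (σ ⟨k, h⟩) else 0 with hw
  have hmono : ∀ i j, i ≤ j → j < n → w i ≤ w j := by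
    intro i j hij hjn
    have hin : i < n := lt_of_le_of_lt hij hjn
    simp only [hw, dif_pos hin, dif_pos hjn]
    exact Tuple.monotone_sort fz (show (⟨i, hin⟩ : Fin n) ≤ ⟨j, hjn⟩ from hij)
  have hwidth : w (n-1) - w 0 ≤ 1 := by
    have h1 : w (n-1) < 1 := by
      simp only [hw, dif_pos (by omega : n - 1 < n)]
      exact Int.fract_lt_one _
    have h2 : 0 ≤ w 0 := by
      simp only [hw, dif_pos (by omega : 0 < n)]
      exact Int.fract_nonneg _
    linarith
  obtain ⟨k, hkn, hVk⟩ := exists_cut n hn1 w hmono hwidth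
  have hG := G_le n hn1 w
  -- integer shifts at sorted positions
  set μ : Fin n → ℤ := fun t => ⌊z (t : ℕ)⌋ - (if ((σ⁻¹ t : Fin n) : ℕ) < k then 1 else 0)
    with hμ
  -- the cut configuration agrees with i ↦ z(σ i) - μ(σ i) on range n
  have hWc : ∀ i < n, (w i + if i < k then 1 else 0)
      = (if h : i < n then (z ((σ ⟨i, h⟩ : Fin n) : ℕ) - (μ (σ ⟨i, h⟩) : ℝ)) else 0) := by
    intro i hi
    simp only [hw, dif_pos hi, hμ, Equiv.Perm.inv_def, Equiv.symm_apply_apply, hfz]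
    rw [Int.fract]
    push_cast
    ring
  have step1 : V n (fun i => w i + if i < k then 1 else 0)
      = V n (fun i => if h : i < n then (z ((σ ⟨i, h⟩ : Fin n) : ℕ) - (μ (σ ⟨i, h⟩) : ℝ)) else 0) :=
    V_congr hWc
  have step2 : V n (fun i => if h : i < n then (z ((σ ⟨i, h⟩ : Fin n) : ℕ) - (μ (σ ⟨i, h⟩) : ℝ)) else 0)
      = V n (fun i => if h : i < n then (z i - (μ ⟨i, h⟩ : ℝ)) else 0) := by
    exact V_perm n (fun t => z (t : ℕ) - (μ t : ℝ)) σ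
  -- now define v
  set μ0 : ℤ := μ ⟨0, by omega⟩ with hμ0
  refine ⟨fun t => μ ⟨(t : ℕ) + 1, by omega⟩ - μ0, ?_⟩
  have hbridge := quadForm_eq_V (d := d) (x - intCast (fun t => μ ⟨(t : ℕ) + 1, by omega⟩ - μ0))
  rw [hbridge]
  have hagree : ∀ i < n, mkz d (x - intCast (fun t => μ ⟨(t : ℕ) + 1, by omega⟩ - μ0)) i
      = (if h : i < n then (z i - (μ ⟨i, h⟩ : ℝ)) else 0) + (μ0 : ℝ) := by
    intro i hi
    rcases Nat.eq_zero_or_pos i with h0 | hpos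
    · subst h0
      rw [mkz_zero]
      simp only [dif_pos hi]
      have hz0 : z 0 = 0 := mkz_zero d x
      rw [hz0]
      simp [hμ0]
    · obtain ⟨t, rfl⟩ : ∃ t : ℕ, i = t + 1 := ⟨i - 1, by omega⟩
      have htd : t < d := by omega
      have := mkz_succ d (x - intCast (fun t => μ ⟨(t : ℕ) + 1, by omega⟩ - μ0)) ⟨t, htd⟩
      simp only at this
      rw [this]
      simp only [Pi.sub_apply, intCast, dif_pos hi]
      have hzt : z (t + 1) = x ⟨t, htd⟩ := mkz_succ d x ⟨t, htd⟩
      rw [hzt]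
      push_cast
      ring
  have step3 : V (d+1) (mkz d (x - intCast (fun t => μ ⟨(t : ℕ) + 1, by omega⟩ - μ0)))
      = V n (fun i => if h : i < n then (z i - (μ ⟨i, h⟩ : ℝ)) else 0) := by
    have e1 : V (d+1) (mkz d (x - intCast (fun t => μ ⟨(t : ℕ) + 1, by omega⟩ - μ0)))
        = V n (fun i => (if h : i < n then (z i - (μ ⟨i, h⟩ : ℝ)) else 0) + (μ0 : ℝ)) :=
      V_congr hagree
    rw [e1, V_add_const]
  rw [step3, ← step2, ← step1]
  refine le_trans hVk (le_trans hG ?_)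
  have : ((n : ℝ)^2 - 1) / 12 = (d : ℝ) * ((d : ℝ) + 2) / 12 := by
    rw [hn]; push_cast; ring
  rw [this]

/-- The deep hole. -/
def xstar (d : ℕ) : Fin d → ℝ := fun t => ((t : ℝ) + 1) / ((d : ℝ) + 1)

lemma deephole {d : ℕ} (hd : 2 ≤ d) (v : Fin d → ℤ) :
    (d : ℝ) * ((d : ℝ) + 2) / 12 ≤ quadForm (QAstar d) (xstar d - intCast v) := by
  set n := d + 1 with hn
  have hnR : (0:ℝ) < (n : ℝ) := by positivity
  -- the integer vector b
  set b : Fin n → ℤ := fun t =>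
    if h : 1 ≤ (t : ℕ) ∧ (t : ℕ) ≤ d then (t : ℤ) - (n : ℤ) * v ⟨(t : ℕ) - 1, by omega⟩ else 0
    with hb
  have hbmod : ∀ t : Fin n, ∃ c : ℤ, b t - (t : ℤ) = (n : ℤ) * c := by
    intro t
    by_cases h : 1 ≤ (t : ℕ) ∧ (t : ℕ) ≤ d
    · exact ⟨-v ⟨(t : ℕ) - 1, by omega⟩, by simp only [hb, dif_pos h]; ring⟩
    · have : (t : ℕ) = 0 := by omega
      exact ⟨0, by simp only [hb, dif_neg h, this]; simp⟩
  have hbinj : Function.Injective b := by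
    intro s t hst
    obtain ⟨cs, hcs⟩ := hbmod s
    obtain ⟨ct, hct⟩ := hbmod t
    have h1 : (s : ℤ) - (t : ℤ) = (n : ℤ) * (ct - cs) := by
      linear_combination hct - hcs + hst
    have hn0 : (0:ℤ) < (n : ℤ) := by exact_mod_cast Nat.succ_pos d
    have hsn : ((s : ℕ) : ℤ) < (n : ℤ) := by exact_mod_cast s.isLt
    have htn : ((t : ℕ) : ℤ) < (n : ℤ) := by exact_mod_cast t.isLt
    have hs0 : (0:ℤ) ≤ ((s : ℕ) : ℤ) := Int.ofNat_nonneg _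
    have ht0 : (0:ℤ) ≤ ((t : ℕ) : ℤ) := Int.ofNat_nonneg _
    have hk : ct - cs = 0 := by
      rcases lt_trichotomy (ct - cs) 0 with h | h | h
      · exfalso
        have hmul : (n:ℤ) * (ct - cs) ≤ -(n:ℤ) := by
          nlinarith [mul_nonneg (le_of_lt hn0) (by omega : (0:ℤ) ≤ -(ct-cs)-1)]
        linarith [h1, hsn, htn, hs0, ht0, hmul]
      · exact h
      · exfalso
        have hmul : (n:ℤ) ≤ (n:ℤ) * (ct - cs) := by
          nlinarith [mul_nonneg (le_of_lt hn0) (by omega : (0:ℤ) ≤ (ct-cs)-1)]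
        linarith [h1, hsn, htn, hs0, ht0, hmul]
    have : ((s : ℕ) : ℤ) = ((t : ℕ) : ℤ) := by
      have h2 := h1
      rw [hk, mul_zero] at h2
      linarith
    exact Fin.ext (by exact_mod_cast this)
  -- real version of b
  set B : ℕ → ℝ := fun i => if h : i < n then ((b ⟨i, h⟩ : ℤ) : ℝ) else 0 with hB
  have hagree : ∀ i < n, mkz d (xstar d - intCast v) i = (1/(n:ℝ)) * B i := by
    intro i hi
    rcases Nat.eq_zero_or_pos i with h0 | hpos
    · subst h0
      rw [mkz_zero]
      simp only [hB, dif_pos hi, hb]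
      rw [dif_neg (by omega : ¬(1 ≤ (0:ℕ) ∧ (0:ℕ) ≤ d))]
      simp
    · obtain ⟨t, rfl⟩ : ∃ t : ℕ, i = t + 1 := ⟨i - 1, by omega⟩
      have htd : t < d := by omega
      have hm := mkz_succ d (xstar d - intCast v) ⟨t, htd⟩
      simp only at hm
      rw [hm]
      simp only [hB, dif_pos hi, hb]
      rw [dif_pos (show 1 ≤ t+1 ∧ t+1 ≤ d by omega)]
      simp only [Pi.sub_apply, intCast, xstar]
      have hne : ((n:ℝ)) ≠ 0 := ne_of_gt hnR
      push_cast
      field_simp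
      rw [hn]; push_cast; ring
  have hquad : quadForm (QAstar d) (xstar d - intCast v) = (1/(n:ℝ))^2 * V n B := by
    rw [quadForm_eq_V]
    rw [V_congr hagree]
    exact V_smul n B (1/(n:ℝ))
  have hVB : (n:ℝ)^2 * ((n:ℝ)^2 - 1) / 12 ≤ V n B := by
    have hdouble := V_double n B
    have hfin : ∑ j ∈ range n, ∑ i ∈ range n, (B j - B i)^2
        = ∑ j : Fin n, ∑ i : Fin n, ((b j : ℝ) - (b i : ℝ))^2 := by
      rw [← Fin.sum_univ_eq_sum_range (fun j => ∑ i ∈ range n, (B j - B i)^2) n]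
      refine Finset.sum_congr rfl fun j _ => ?_
      rw [← Fin.sum_univ_eq_sum_range (fun i => (B (j:ℕ) - B i)^2) n]
      refine Finset.sum_congr rfl fun i _ => ?_
      simp only [hB, dif_pos j.isLt, dif_pos i.isLt, Fin.eta]
    have hlb := inj_double_sum_lb b hbinj
    rw [← hfin, hdouble] at hlb
    linarith
  rw [hquad]
  have hfinal : (d : ℝ) * ((d : ℝ) + 2) / 12 = (1/(n:ℝ))^2 * ((n:ℝ)^2 * ((n:ℝ)^2 - 1) / 12) := by
    have hne : ((n:ℝ)) ≠ 0 := ne_of_gt hnR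
    rw [hn]
    push_cast
    field_simp
    ring
  rw [hfinal]
  have h12 : (0:ℝ) ≤ (1/(n:ℝ))^2 := by positivity
  exact mul_le_mul_of_nonneg_left hVB h12

end InhomAux

/-- The inhomogeneous minimum of `Q_{A*_d}` equals `d(d+2)/12`. -/
theorem inhomMin_QAstar (d : ℕ) (hd : 2 ≤ d) :
    inhomMin (QAstar d) = (d : ℝ) * ((d : ℝ) + 2) / 12 := by
  have hbdd : ∀ x : Fin d → ℝ,
      BddBelow (Set.range fun v : Fin d → ℤ => quadForm (QAstar d) (x - intCast v)) := by
    intro x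
    refine ⟨0, ?_⟩
    rintro r ⟨w, rfl⟩
    exact InhomAux.quadForm_nonneg _
  have hub : ∀ x : Fin d → ℝ,
      (⨅ v : Fin d → ℤ, quadForm (QAstar d) (x - intCast v)) ≤ (d : ℝ) * ((d : ℝ) + 2) / 12 := by
    intro x
    obtain ⟨v, hv⟩ := InhomAux.exists_good hd x
    exact ciInf_le_of_le (hbdd x) v hv
  unfold inhomMin
  apply le_antisymm
  · exact ciSup_le hub
  · refine le_ciSup_of_le ⟨(d : ℝ) * ((d : ℝ) + 2) / 12, ?_⟩ (InhomAux.xstar d) ?_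
    · rintro r ⟨x, rfl⟩
      exact hub x
    · exact le_ciInf fun v => InhomAux.deephole hd v
end
end

section
/- For every positive definite quadratic form Q in 2 variables, the packing density satisfies δ(Q) ≤ π/√12 = 0.9069…, i.e., the hexagonal form Q_{A_2} (with Q[x] = x_1² + x_1x_2 + x_2²) attains the maximal lattice packing density in dimension 2. -/
open Matrix

noncomputable section

/-- The hexagonal form `Q_{A_2}`. -/
def QA2 : Matrix (Fin 2) (Fin 2) ℝ := !![1, 1/2; 1/2, 1]

def binF (a b c : ℝ) (x y : ℤ) : ℝ := a*(x:ℝ)^2 + 2*b*(x:ℝ)*(y:ℝ) + c*(y:ℝ)^2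

lemma binF_pos {a b c : ℝ} (ha : 0 < a) (hD : 0 < a*c - b^2) (x y : ℤ)
    (h : ¬(x = 0 ∧ y = 0)) : 0 < binF a b c x y := by
  have key : a * binF a b c x y = (a*(x:ℝ)+b*(y:ℝ))^2 + (a*c-b^2)*(y:ℝ)^2 := by
    unfold binF; ring
  rcases eq_or_ne y 0 with hy | hy
  · subst hy
    have hx : x ≠ 0 := fun hh => h ⟨hh, rfl⟩
    have hx' : (x:ℝ) ≠ 0 := Int.cast_ne_zero.mpr hx
    have hax : a * (x:ℝ) ≠ 0 := mul_ne_zero ha.ne' hx'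
    have h2 : 0 < (a*(x:ℝ)+b*((0:ℤ):ℝ))^2 := by
      push_cast
      have : a*(x:ℝ)+b*0 = a*(x:ℝ) := by ring
      rw [this]
      positivity
    nlinarith [key, sq_nonneg ((0:ℤ):ℝ)]
  · have hy2 : 0 < (y:ℝ)^2 := by
      have h' : ((y:ℝ)) ≠ 0 := Int.cast_ne_zero.mpr hy
      positivity
    nlinarith [key, sq_nonneg (a*(x:ℝ)+b*(y:ℝ))]

lemma binF_exists_min {a b c : ℝ} (ha : 0 < a) (hc : 0 < c) (hD : 0 < a*c - b^2) :
    ∃ p q : ℤ, ¬(p = 0 ∧ q = 0) ∧ ∀ x y : ℤ, ¬(x = 0 ∧ y = 0) →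
      binF a b c p q ≤ binF a b c x y := by
  set D := a*c - b^2 with hDdef
  have hsD : 0 < Real.sqrt D := Real.sqrt_pos.mpr hD
  set N : ℤ := ⌈(a+c)/Real.sqrt D⌉ + 1 with hN
  have hNpos : 0 < (a+c)/Real.sqrt D := by positivity
  have hN1 : 1 ≤ N := by
    have := Int.ceil_pos.mpr hNpos
    omega
  have hNgt : (a+c)/Real.sqrt D < (N:ℝ) := by
    have h1 := Int.le_ceil ((a+c)/Real.sqrt D)
    have h2 : ((⌈(a+c)/Real.sqrt D⌉ : ℤ):ℝ) < (N:ℝ) := by exact_mod_cast lt_add_one _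
    linarith
  set s : Finset (ℤ × ℤ) := (Finset.Icc (-N) N ×ˢ Finset.Icc (-N) N).erase (0,0) with hs
  have h10 : ((1,0) : ℤ × ℤ) ∈ s := by
    simp only [hs, Finset.mem_erase, Finset.mem_product, Finset.mem_Icc]
    exact ⟨by simp, ⟨by omega, by omega⟩, ⟨by omega, by omega⟩⟩
  obtain ⟨⟨p, q⟩, hpq_mem, hpq_min⟩ :=
    s.exists_min_image (fun pq => binF a b c pq.1 pq.2) ⟨(1,0), h10⟩
  have hpq_ne : ¬(p = 0 ∧ q = 0) := by
    rintro ⟨rfl, rfl⟩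
    exact (Finset.notMem_erase _ _) hpq_mem
  refine ⟨p, q, hpq_ne, fun x y hxy => ?_⟩
  by_cases hmem : ((x,y) : ℤ × ℤ) ∈ s
  · exact hpq_min (x,y) hmem
  have hbig : ∀ z : ℤ, (a+c)/Real.sqrt D < |(z:ℝ)| → (a+c)^2 < D * (z:ℝ)^2 := by
    intro z hz
    have h2 : ((a+c)/Real.sqrt D)^2 < (z:ℝ)^2 := by
      have := sq_lt_sq' (by linarith [abs_nonneg (z:ℝ)] : -|(z:ℝ)| < (a+c)/Real.sqrt D) hz
      calc ((a+c)/Real.sqrt D)^2 < |(z:ℝ)|^2 := this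
        _ = (z:ℝ)^2 := sq_abs _
    have hsq : (Real.sqrt D)^2 = D := Real.sq_sqrt hD.le
    have h3 : ((a+c)/Real.sqrt D)^2 = (a+c)^2 / D := by rw [div_pow, hsq]
    rw [h3] at h2
    have := (div_lt_iff₀ hD).mp h2
    linarith
  have hout : N < |x| ∨ N < |y| := by
    by_contra hcon
    push_neg at hcon
    apply hmem
    simp only [hs, Finset.mem_erase, Finset.mem_product, Finset.mem_Icc]
    refine ⟨by simpa [Prod.ext_iff] using hxy, ?_, ?_⟩
    · exact abs_le.mp hcon.1
    · exact abs_le.mp hcon.2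
  have hFpq_le_a : binF a b c p q ≤ a := by
    have := hpq_min (1,0) h10
    simpa [binF] using this
  have castabs : ∀ z : ℤ, N < |z| → (a+c)/Real.sqrt D < |(z:ℝ)| := by
    intro z hz
    have h1 : ((N:ℤ):ℝ) < ((|z|:ℤ):ℝ) := by exact_mod_cast hz
    rw [Int.cast_abs] at h1
    linarith
  have hgt : a < binF a b c x y := by
    have keya : a * binF a b c x y = (a*(x:ℝ)+b*(y:ℝ))^2 + D*(y:ℝ)^2 := by
      unfold binF; rw [hDdef]; ring
    have keyc : c * binF a b c x y = (b*(x:ℝ)+c*(y:ℝ))^2 + D*(x:ℝ)^2 := by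
      unfold binF; rw [hDdef]; ring
    rcases hout with hx | hy
    · have hb := hbig x (castabs x hx)
      have h3 : c * a < c * binF a b c x y := by nlinarith [sq_nonneg (b*(x:ℝ)+c*(y:ℝ))]
      exact lt_of_mul_lt_mul_left h3 hc.le
    · have hb := hbig y (castabs y hy)
      have h3 : a * a < a * binF a b c x y := by nlinarith [sq_nonneg (a*(x:ℝ)+b*(y:ℝ))]
      exact lt_of_mul_lt_mul_left h3 ha.le
  linarith


lemma binF_min_sq_le {a b c : ℝ} (ha : 0 < a) (hD : 0 < a*c - b^2)
    (p q : ℤ) (hpq : ¬(p = 0 ∧ q = 0))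
    (hmin : ∀ x y : ℤ, ¬(x = 0 ∧ y = 0) → binF a b c p q ≤ binF a b c x y) :
    (binF a b c p q)^2 ≤ 4/3 * (a*c - b^2) := by
  set lam := binF a b c p q with hlamdef
  have hlam : 0 < lam := binF_pos ha hD p q hpq
  -- gcd of p and q is 1
  have hg0 : Int.gcd p q ≠ 0 := by
    rw [Ne, Int.gcd_eq_zero_iff]; exact hpq
  obtain ⟨g, hg⟩ : ∃ g : ℕ, Int.gcd p q = g := ⟨_, rfl⟩
  obtain ⟨p₁, hp₁⟩ : ((g : ℤ)) ∣ p := hg ▸ Int.gcd_dvd_left p q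
  obtain ⟨q₁, hq₁⟩ : ((g : ℤ)) ∣ q := hg ▸ Int.gcd_dvd_right p q
  rw [hg] at hg0
  have hne1 : ¬(p₁ = 0 ∧ q₁ = 0) := by
    rintro ⟨rfl, rfl⟩
    simp at hp₁ hq₁
    exact hpq ⟨hp₁, hq₁⟩
  have hkey : lam = ((g:ℕ):ℝ)^2 * binF a b c p₁ q₁ := by
    rw [hlamdef]; unfold binF; rw [hp₁, hq₁]; push_cast; ring
  have hF1 : 0 < binF a b c p₁ q₁ := binF_pos ha hD p₁ q₁ hne1
  have h1 : lam ≤ binF a b c p₁ q₁ := hmin p₁ q₁ hne1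
  have hg1 : Int.gcd p q = 1 := by
    rw [hg]
    by_contra hne
    have hge2 : 2 ≤ g := by omega
    have h2r : (2:ℝ) ≤ ((g:ℕ):ℝ) := by exact_mod_cast hge2
    nlinarith [hkey, h1, hF1, sq_nonneg (((g:ℕ):ℝ) - 2)]
  -- Bezout
  have hbez := Int.gcd_eq_gcd_ab p q
  rw [hg1] at hbez
  set u₁ : ℤ := -(Int.gcdB p q) with hu₁
  set u₂ : ℤ := Int.gcdA p q with hu₂
  have he : p * u₂ - q * u₁ = 1 := by
    rw [hu₁, hu₂]; push_cast at hbez; linear_combination -hbez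
  set B : ℝ := a*(p:ℝ)*(u₁:ℝ) + b*((p:ℝ)*(u₂:ℝ) + (q:ℝ)*(u₁:ℝ)) + c*(q:ℝ)*(u₂:ℝ) with hB
  set C : ℝ := binF a b c u₁ u₂ with hC
  have hdet : lam * C - B^2 = (a*c - b^2) * (((p * u₂ - q * u₁ : ℤ)):ℝ)^2 := by
    rw [hlamdef, hB, hC]; unfold binF; push_cast; ring
  rw [he] at hdet
  push_cast at hdet
  set x : ℤ := round (-B / lam) with hx
  have hexp : binF a b c (x*p+u₁) (x*q+u₂) = lam*(x:ℝ)^2 + 2*B*(x:ℝ) + C := by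
    rw [hlamdef, hB, hC]; unfold binF; push_cast; ring
  have hne : ¬(x*p+u₁ = 0 ∧ x*q+u₂ = 0) := by
    rintro ⟨h1', h2'⟩
    have : p * u₂ - q * u₁ = p*(x*q+u₂) - q*(x*p+u₁) := by ring
    rw [h1', h2'] at this
    simp at this
    omega
  have hge : lam ≤ lam*(x:ℝ)^2 + 2*B*(x:ℝ) + C := hexp ▸ hmin _ _ hne
  have hround : |(-B/lam) - ((x:ℤ):ℝ)| ≤ 1/2 := by rw [hx]; exact abs_sub_round _
  have e1 : lam*(x:ℝ)+B = lam * (((x:ℤ):ℝ) - (-B/lam)) := by field_simp; ring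
  have h3 : |lam*(x:ℝ)+B| ≤ lam * (1/2) := by
    rw [e1, abs_mul, abs_of_pos hlam]
    exact mul_le_mul_of_nonneg_left (by rw [abs_sub_comm]; exact hround) hlam.le
  have h4 : (lam*(x:ℝ)+B)^2 ≤ (lam*(1/2))^2 := by
    rw [← sq_abs]
    exact pow_le_pow_left₀ (abs_nonneg _) h3 2
  have hmul : lam * (lam*(x:ℝ)^2 + 2*B*(x:ℝ) + C) = (lam*(x:ℝ)+B)^2 + (lam*C - B^2) := by
    ring
  have h5 : lam * lam ≤ lam * (lam*(x:ℝ)^2 + 2*B*(x:ℝ) + C) :=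
    mul_le_mul_of_nonneg_left hge hlam.le
  clear_value lam B C x
  norm_num at hdet
  rw [hmul] at h5
  have h6 : lam * lam ≤ (lam*(1/2))^2 + (a*c - b^2) := by linarith
  nlinarith [h6]

lemma ballVol_two : ballVol 2 = Real.pi := by
  rw [ballVol, EuclideanSpace.volume_ball]
  norm_num [Fintype.card_fin]
  exact Real.sq_sqrt Real.pi_pos.le

lemma vec_ne_zero {v : Fin 2 → ℤ} (hv : v ≠ 0) : ¬(v 0 = 0 ∧ v 1 = 0) := by
  rintro ⟨h0, h1⟩
  apply hv
  funext i
  fin_cases i <;> assumption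

lemma mk_ne_zero {x y : ℤ} (h : ¬(x = 0 ∧ y = 0)) : (![x, y] : Fin 2 → ℤ) ≠ 0 := by
  intro hh
  exact h ⟨by simpa using congrFun hh 0, by simpa using congrFun hh 1⟩

lemma sqrt_arith : Real.sqrt (4/3) * Real.pi / 2^2 = Real.pi / Real.sqrt 12 := by
  have h12 : (0:ℝ) < Real.sqrt 12 := Real.sqrt_pos.mpr (by norm_num)
  have hprod : Real.sqrt (4/3) * Real.sqrt 12 = 4 := by
    rw [← Real.sqrt_mul (by norm_num : (0:ℝ) ≤ 4/3)]
    rw [show (4/3 : ℝ) * 12 = 16 by norm_num]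
    rw [show (16:ℝ) = 4^2 by norm_num, Real.sqrt_sq (by norm_num)]
  have h4 : (2:ℝ)^2 = 4 := by norm_num
  rw [h4, div_eq_div_iff (by norm_num) h12.ne']
  linear_combination Real.pi * hprod


/-- Lagrange's theorem: every binary PQF has packing density at most `π/√12`,
attained by the hexagonal form. -/
theorem packing_optimal_dim2 :
    (∀ Q : Matrix (Fin 2) (Fin 2) ℝ, IsPQF Q →
      packDensity Q ≤ Real.pi / Real.sqrt 12) ∧
    packDensity QA2 = Real.pi / Real.sqrt 12 := by
  constructor
  · rintro Q ⟨hsym, hpd⟩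
    have hb : Q 1 0 = Q 0 1 := hsym.apply 0 1
    set a := Q 0 0 with hadef
    set b := Q 0 1 with hbdef
    set c := Q 1 1 with hcdef
    have heval : ∀ v : Fin 2 → ℤ, quadForm Q (intCast v) = binF a b c (v 0) (v 1) := by
      intro v
      simp only [quadForm, intCast, binF, dotProduct, mulVec, Fin.sum_univ_two, hb]
      ring
    have hQv : ∀ v : Fin 2 → ℤ, v ≠ 0 → 0 < binF a b c (v 0) (v 1) := by
      intro v hv
      rw [← heval]
      have hvz : intCast v ≠ 0 := by
        intro hh
        apply hv
        funext i
        have := congrFun hh i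
        simpa [intCast] using this
      have := hpd.dotProduct_mulVec_pos (x := intCast v) hvz
      simpa [quadForm] using this
    have ha : 0 < a := by
      have := hQv ![1, 0] (mk_ne_zero (by simp))
      simpa [binF] using this
    have hc : 0 < c := by
      have := hQv ![0, 1] (mk_ne_zero (by simp))
      simpa [binF] using this
    have hdet2 : Q.det = a*c - b^2 := by
      rw [Matrix.det_fin_two, hb]; ring
    have hD : 0 < a*c - b^2 := hdet2 ▸ hpd.det_pos
    obtain ⟨p, q, hpq, hmin⟩ := binF_exists_min ha hc hD
    have hsq := binF_min_sq_le ha hD p q hpq hmin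
    have hSlb : ∀ r ∈ {r | ∃ v : Fin 2 → ℤ, v ≠ 0 ∧ r = quadForm Q (intCast v)}, (0:ℝ) ≤ r := by
      rintro r ⟨v, hv, rfl⟩
      rw [heval]
      exact (hQv v hv).le
    have hmem : binF a b c p q ∈ {r | ∃ v : Fin 2 → ℤ, v ≠ 0 ∧ r = quadForm Q (intCast v)} := by
      refine ⟨![p, q], mk_ne_zero hpq, ?_⟩
      rw [heval]
      simp
    have h0 : 0 ≤ homMin Q := le_csInf ⟨_, hmem⟩ hSlb
    have hup : homMin Q ≤ binF a b c p q := csInf_le ⟨0, hSlb⟩ hmem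
    have hh2 : (homMin Q)^2 ≤ 4/3 * (a*c - b^2) := by
      have := pow_le_pow_left₀ h0 hup 2
      linarith
    rw [packDensity, hdet2, ballVol_two, ← sqrt_arith]
    have hs : Real.sqrt (homMin Q ^ 2 / (a*c - b^2)) ≤ Real.sqrt (4/3) :=
      Real.sqrt_le_sqrt (by rw [div_le_iff₀ hD]; linarith)
    have h2 : Real.sqrt (homMin Q ^ 2 / (a*c - b^2)) * Real.pi ≤ Real.sqrt (4/3) * Real.pi :=
      mul_le_mul_of_nonneg_right hs Real.pi_pos.le
    linarith
  · -- the hexagonal form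
    have heval : ∀ v : Fin 2 → ℤ, quadForm QA2 (intCast v) =
        (((v 0)^2 + (v 0)*(v 1) + (v 1)^2 : ℤ) : ℝ) := by
      intro v
      simp [quadForm, intCast, QA2, dotProduct, mulVec, Fin.sum_univ_two]
      push_cast
      ring
    have hint : ∀ x y : ℤ, ¬(x = 0 ∧ y = 0) → 1 ≤ x^2 + x*y + y^2 := by
      intro x y h
      have h4 : 0 < 4 * (x^2 + x*y + y^2) := by
        rcases eq_or_ne y 0 with rfl | hy
        · have hx : x ≠ 0 := fun hh => h ⟨hh, rfl⟩
          rcases lt_or_gt_of_ne hx with h' | h' <;> nlinarith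
        · rcases lt_or_gt_of_ne hy with h' | h' <;> nlinarith [sq_nonneg (2*x + y)]
      omega
    have hSlb : ∀ r ∈ {r | ∃ v : Fin 2 → ℤ, v ≠ 0 ∧ r = quadForm QA2 (intCast v)}, (1:ℝ) ≤ r := by
      rintro r ⟨v, hv, rfl⟩
      rw [heval]
      exact_mod_cast hint (v 0) (v 1) (vec_ne_zero hv)
    have hmem : (1:ℝ) ∈ {r | ∃ v : Fin 2 → ℤ, v ≠ 0 ∧ r = quadForm QA2 (intCast v)} := by
      refine ⟨![1, 0], mk_ne_zero (by simp), ?_⟩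
      rw [heval]
      norm_num
    have hhm : homMin QA2 = 1 := by
      refine le_antisymm (csInf_le ⟨1, hSlb⟩ hmem) (le_csInf ⟨_, hmem⟩ hSlb)
    have hdet : QA2.det = 3/4 := by
      rw [QA2, Matrix.det_fin_two_of]
      norm_num
    rw [packDensity, hhm, hdet, ballVol_two, ← sqrt_arith]
    norm_num
end
end
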